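/- arXiv:2601.21559 — 5 statements merged into one kernel-verified Lean document; each statement's English description precedes it below -/
import Mathlib

section
/- Let R = K[x] and P_n the two-term complex R --x^n--> R in degrees -1, 0. For positive integers m, n, the set {x^i_{m,n} : max(0, n-m) ≤ i < n} is a K-basis of the Hom space Hom_{K^b(proj R)}(P_m, P_n), where x^i_{m,n} is the chain map given by multiplication by x^{i+m-n} in degree -1 and x^i in degree 0. -/
/- Setup: `R = K[x]`, the two-term cochain complexes `P n = (R --x^n--> R)` in degrees
`-1, 0`, and the morphisms `x^i_{m,n}` and `y^i_{m,n}` in the bounded homotopy category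
`K^b(proj R)` (realized inside the homotopy category of cochain complexes of
`R`-modules). -/

noncomputable section
open CategoryTheory CategoryTheory.Limits Polynomial ZeroObject CategoryTheory.Pretriangulated

variable (K : Type) [Field K]

abbrev RMod := ModuleCat.of (Polynomial K) (Polynomial K)

/-- Multiplication by `x^a` on `R = K[x]`. -/
def mulX (a : ℕ) : RMod K ⟶ RMod K :=
  ModuleCat.ofHom (LinearMap.mulLeft (Polynomial K) ((X : Polynomial K) ^ a))

lemma mulX_comp (a b : ℕ) : mulX K a ≫ mulX K b = mulX K (a + b) := by
  dsimp [mulX]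
  rw [show ((X : Polynomial K) ^ (a + b)) = X ^ b * X ^ a by
        rw [← pow_add, add_comm],
      LinearMap.mulLeft_mul]
  rfl

/-- The graded pieces of the two-term complexes `P n`. -/
def Pobj : ℤ → ModuleCat (Polynomial K) := fun i =>
  if i = -1 ∨ i = 0 then RMod K else ModuleCat.of (Polynomial K) PUnit

lemma PobjNeg : Pobj K (-1) = RMod K := by simp [Pobj]
lemma PobjZero : Pobj K 0 = RMod K := by simp [Pobj]

/-- The differential of `P n`. -/
def Pd (n : ℕ) : ∀ i : ℤ, Pobj K i ⟶ Pobj K (i + 1) := fun i =>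
  if h : i = -1 then
    eqToHom (by rw [h, PobjNeg]) ≫ mulX K n ≫ eqToHom (by rw [h]; norm_num [PobjZero])
  else 0

/-- The two-term complex `P n = (R --x^n--> R)` in degrees `-1, 0`. -/
def P (n : ℕ) : CochainComplex (ModuleCat (Polynomial K)) ℤ :=
  CochainComplex.of (Pobj K) (Pd K n) (fun i => by
    by_cases h : i = -1
    · have h2 : Pd K n (i + 1) = 0 := dif_neg (by omega)
      rw [h2, Limits.comp_zero]
    · have h1 : Pd K n i = 0 := dif_neg h
      rw [h1, Limits.zero_comp])

lemma P_d_eq_zero (n : ℕ) (i j : ℤ) (hi : i ≠ -1) : (P K n).d i j = 0 := by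
  by_cases h : i + 1 = j
  · subst h
    show CochainComplex.of.d (Pobj K) (Pd K n) i (i + 1) = 0
    rw [CochainComplex.of_d]
    exact dif_neg hi
  · exact HomologicalComplex.shape _ _ _ (by simpa using h)

/-- The components of the chain map which is multiplication by `x^a` in degree `-1`
and by `x^b` in degree `0`. -/
def xComp (a b : ℕ) : ∀ i : ℤ, Pobj K i ⟶ Pobj K i := fun i =>
  if h : i = -1 then eqToHom (by rw [h, PobjNeg]) ≫ mulX K a ≫ eqToHom (by rw [h, PobjNeg])
  else if h0 : i = 0 then
    eqToHom (by rw [h0, PobjZero]) ≫ mulX K b ≫ eqToHom (by rw [h0, PobjZero])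
  else 0

/-- The chain map `P m ⟶ P n` which is multiplication by `x^a` in degree `-1` and by
`x^b` in degree `0`; it commutes with the differentials since `a + n = b + m`. -/
def xMap (m n a b : ℕ) (hab : a + n = b + m) : P K m ⟶ P K n :=
  CochainComplex.ofHom (xComp K a b) (by
    intro i
    change xComp K a b i ≫ CochainComplex.of.d (Pobj K) (Pd K n) i (i + 1) =
      CochainComplex.of.d (Pobj K) (Pd K m) i (i + 1) ≫ xComp K a b (i + 1)
    rw [CochainComplex.of_d, CochainComplex.of_d]
    by_cases hi : i = -1
    · subst hi
      show xComp K a b (-1) ≫ Pd K n (-1) = Pd K m (-1) ≫ xComp K a b (-1 + 1)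
      rw [show xComp K a b (-1 + 1) = xComp K a b 0 from rfl]
      rw [show xComp K a b (-1) = eqToHom (PobjNeg K) ≫ mulX K a ≫ eqToHom (PobjNeg K).symm
          from dif_pos rfl]
      rw [show xComp K a b 0 = eqToHom (PobjZero K) ≫ mulX K b ≫ eqToHom (PobjZero K).symm
          from by rw [xComp, dif_neg (by norm_num), dif_pos rfl]]
      rw [show Pd K n (-1) = eqToHom (PobjNeg K) ≫ mulX K n ≫
            eqToHom (by norm_num [PobjZero] : RMod K = Pobj K (-1 + 1))
          from dif_pos rfl]
      rw [show Pd K m (-1) = eqToHom (PobjNeg K) ≫ mulX K m ≫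
            eqToHom (by norm_num [PobjZero] : RMod K = Pobj K (-1 + 1))
          from dif_pos rfl]
      simp only [Category.assoc, eqToHom_trans_assoc, eqToHom_refl, Category.id_comp]
      try simp only [Category.comp_id]
      rw [← Category.assoc (mulX K a), mulX_comp, ← Category.assoc (mulX K m), mulX_comp, hab,
        Nat.add_comm b m]
      try rfl
    · have h1 : Pd K m i = 0 := dif_neg hi
      have h2 : Pd K n i = 0 := dif_neg hi
      rw [h1, h2, Limits.comp_zero, Limits.zero_comp])

/-- The components of `y^i_{m,n}`. -/
def yComp (m n a : ℕ) : ∀ i : ℤ, (P K m).X i ⟶ ((P K n)⟦(1 : ℤ)⟧).X i := fun i =>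
  if h : i = -1 then
    eqToHom (by rw [h]; exact PobjNeg K) ≫ mulX K a ≫
      eqToHom (by rw [h]; show RMod K = Pobj K (-1 + 1); norm_num [PobjZero])
  else 0

/-- The chain map `P m ⟶ (P n)⟦1⟧` whose only nonzero component is multiplication by
`x^a` in degree `-1` (landing in the degree `0` part of `P n`). -/
def yMap (m n a : ℕ) : P K m ⟶ (P K n)⟦(1 : ℤ)⟧ where
  f := yComp K m n a
  comm' := fun i j hij => by
    have hj : i + 1 = j := hij
    have hY : ∀ i' j' : ℤ, i' ≠ -2 → ((P K n)⟦(1 : ℤ)⟧).d i' j' = 0 := fun i' j' h => by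
      rw [CochainComplex.shiftFunctor_obj_d',
        P_d_eq_zero K n _ _ (by change i' + 1 ≠ -1; omega), smul_zero]; rfl
    by_cases hi : i = -1
    · rw [hY i j (by omega), Limits.comp_zero,
        show yComp K m n a j = 0 from dif_neg (by omega), Limits.comp_zero]
    · rw [show yComp K m n a i = 0 from dif_neg hi, Limits.zero_comp]
      by_cases hj' : j = -1
      · rw [P_d_eq_zero K m i j hi, Limits.zero_comp]
      · rw [show yComp K m n a j = 0 from dif_neg hj', Limits.comp_zero]

/-- The homotopy category of cochain complexes of `K[x]`-modules, in which the bounded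
homotopy category of finitely generated projectives embeds fully faithfully. -/
abbrev KbT := HomotopyCategory (ModuleCat (Polynomial K)) (ComplexShape.up ℤ)

abbrev Q : CochainComplex (ModuleCat (Polynomial K)) ℤ ⥤ KbT K :=
  HomotopyCategory.quotient _ _

/-- `P n` as an object of the homotopy category. -/
abbrev Pbar (n : ℕ) : KbT K := (Q K).obj (P K n)

/-- The morphism `x^i_{m,n} : P m ⟶ P n` in the homotopy category, defined for
`max (0, n - m) ≤ i` (expressed with truncated subtraction on `ℕ`); in degree `-1` it is
multiplication by `x^(i+m-n)` and in degree `0` multiplication by `x^i`. -/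
def xbar (m n i : ℕ) (h : n - m ≤ i) : Pbar K m ⟶ Pbar K n :=
  (Q K).map (xMap K m n (i + m - n) i (by omega))

/-- The identification `Q(P n ⟦1⟧) ≅ (Q (P n))⟦1⟧` in the homotopy category. -/
def shIso (n : ℕ) : (Q K).obj ((P K n)⟦(1 : ℤ)⟧) ≅ (Pbar K n)⟦(1 : ℤ)⟧ :=
  ((Q K).commShiftIso (1 : ℤ)).app (P K n)

/-- The morphism `y^i_{m,n} : P m ⟶ (P n)[1]` in the homotopy category, defined for
`i ≤ m`; its only nonzero component is multiplication by `x^(m-i)` in degree `-1`. -/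
def ybar (m n i : ℕ) (_h : i ≤ m) : Pbar K m ⟶ (Pbar K n)⟦(1 : ℤ)⟧ :=
  (Q K).map (yMap K m n (m - i)) ≫ (shIso K n).hom

variable (m n : ℕ)

def toP (x : RMod K) : Polynomial K := x
def ofP (p : Polynomial K) : RMod K := p

lemma toP_ofP (p : Polynomial K) : toP K (ofP K p) = p := rfl
lemma toP_add (x y : RMod K) : toP K (x + y) = toP K x + toP K y := rfl

def mulP (p : Polynomial K) : RMod K ⟶ RMod K :=
  ModuleCat.ofHom (LinearMap.mulLeft (Polynomial K) p)

lemma mulP_comp (p q : Polynomial K) : mulP K p ≫ mulP K q = mulP K (q * p) := by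
  apply ModuleCat.hom_ext; apply LinearMap.ext; intro x
  show q * (p * toP K x) = (q * p) * toP K x
  ring

lemma mulP_apply (p : Polynomial K) (x : RMod K) : toP K (mulP K p x) = p * toP K x := rfl

lemma homRMod_eq (g : RMod K ⟶ RMod K) : g = mulP K (toP K (g (ofP K 1))) := by
  apply ModuleCat.hom_ext; apply LinearMap.ext; intro x
  show g x = (toP K (g (ofP K 1))) * toP K x
  conv_lhs => rw [show x = (toP K x) • (ofP K 1) by
    show x = ofP K (toP K x * 1); rw [mul_one]; rfl]
  rw [map_smul]
  show toP K x * toP K (g (ofP K 1)) = _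
  exact mul_comm _ _

lemma PX_eq (i : ℤ) (h : i = -1 ∨ i = 0) : (P K n).X i = RMod K := by
  rcases h with h | h <;> subst h <;> rfl

def toR {A B : ModuleCat (Polynomial K)} (hA : A = RMod K) (hB : B = RMod K)
    (g : A ⟶ B) : RMod K ⟶ RMod K := eqToHom hA.symm ≫ g ≫ eqToHom hB

lemma toR_comp {A B C : ModuleCat (Polynomial K)} (hA : A = RMod K) (hB : B = RMod K)
    (hC : C = RMod K) (u : A ⟶ B) (v : B ⟶ C) :
    toR K hA hC (u ≫ v) = toR K hA hB u ≫ toR K hB hC v := by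
  simp [toR]

lemma toR_add {A B : ModuleCat (Polynomial K)} (hA : A = RMod K) (hB : B = RMod K)
    (u v : A ⟶ B) : toR K hA hB (u + v) = toR K hA hB u + toR K hA hB v := by
  simp [toR]

lemma toR_zero {A B : ModuleCat (Polynomial K)} (hA : A = RMod K) (hB : B = RMod K) :
    toR K hA hB (0 : A ⟶ B) = 0 := by simp [toR]

lemma toR_eq_iff {A B : ModuleCat (Polynomial K)} (hA : A = RMod K) (hB : B = RMod K)
    (g : A ⟶ B) (u : RMod K ⟶ RMod K) :
    toR K hA hB g = u ↔ g = eqToHom hA ≫ u ≫ eqToHom hB.symm := by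
  constructor
  · intro h; rw [← h]; simp [toR]
  · intro h; rw [h]; simp [toR]

def f0 (f : P K m ⟶ P K n) : RMod K ⟶ RMod K :=
  toR K (PX_eq K m 0 (Or.inr rfl)) (PX_eq K n 0 (Or.inr rfl)) (f.f 0)

def f1 (f : P K m ⟶ P K n) : RMod K ⟶ RMod K :=
  toR K (PX_eq K m (-1) (Or.inl rfl)) (PX_eq K n (-1) (Or.inl rfl)) (f.f (-1))

def ev0 (f : P K m ⟶ P K n) : Polynomial K := toP K (f0 K m n f (ofP K 1))
def ev1 (f : P K m ⟶ P K n) : Polynomial K := toP K (f1 K m n f (ofP K 1))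

lemma d_toR : toR K (PX_eq K n (-1) (Or.inl rfl)) (PX_eq K n 0 (Or.inr rfl)) ((P K n).d (-1) 0)
    = mulX K n := rfl

lemma f0_xMap (a b : ℕ) (hab : a + n = b + m) : f0 K m n (xMap K m n a b hab) = mulX K b := rfl
lemma f1_xMap (a b : ℕ) (hab : a + n = b + m) : f1 K m n (xMap K m n a b hab) = mulX K a := rfl

lemma ev0_xMap (a b : ℕ) (hab : a + n = b + m) :
    ev0 K m n (xMap K m n a b hab) = Polynomial.X ^ b := by
  show toP K (mulX K b (ofP K 1)) = _
  show Polynomial.X ^ b * 1 = _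
  rw [mul_one]

lemma ev0_add (f g : P K m ⟶ P K n) : ev0 K m n (f + g) = ev0 K m n f + ev0 K m n g := rfl
lemma ev0_zero : ev0 K m n 0 = 0 := by
  show toP K ((0 : RMod K ⟶ RMod K) (ofP K 1)) = 0
  rfl
lemma ev0_smul (c : K) (f : P K m ⟶ P K n) : ev0 K m n (c • f) = c • ev0 K m n f := by
  rw [Polynomial.smul_eq_C_mul]
  rfl

lemma hom_to_punit {A : ModuleCat (Polynomial K)} (i : ℤ) (h1 : i ≠ -1) (h0 : i ≠ 0)
    (g : A ⟶ (P K n).X i) : g = 0 := by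
  have e : (P K n).X i = ModuleCat.of (Polynomial K) PUnit := by
    show Pobj K i = _
    rw [Pobj, if_neg (by tauto)]
  haveI : Subsingleton ((ModuleCat.of (Polynomial K) PUnit) : Type) :=
    inferInstanceAs (Subsingleton PUnit)
  have h : g ≫ eqToHom e = 0 := by
    apply ModuleCat.hom_ext; apply LinearMap.ext; intro x
    exact Subsingleton.elim _ _
  have : (g ≫ eqToHom e) ≫ eqToHom e.symm = g := by simp
  rw [← this, h, Limits.zero_comp]

lemma ev_comm (f : P K m ⟶ P K n) :
    Polynomial.X ^ n * ev1 K m n f = Polynomial.X ^ m * ev0 K m n f := by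
  have h := f.comm (-1) 0
  have h2 := congrArg (toR K (PX_eq K m (-1) (Or.inl rfl)) (PX_eq K n 0 (Or.inr rfl))) h
  rw [toR_comp K _ (PX_eq K n (-1) (Or.inl rfl)) _ _ _,
      toR_comp K _ (PX_eq K m 0 (Or.inr rfl)) _ _ _, d_toR, d_toR] at h2
  -- h2 : f1 f ≫ mulX n = mulX m ≫ f0 f
  have h3 := congrArg (fun u : RMod K ⟶ RMod K => toP K (u (ofP K 1))) h2
  dsimp only at h3
  calc Polynomial.X ^ n * ev1 K m n f
      = toP K ((f1 K m n f ≫ mulX K n) (ofP K 1)) := rfl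
    _ = toP K ((mulX K m ≫ f0 K m n f) (ofP K 1)) := h3
    _ = toP K (f0 K m n f (ofP K ((Polynomial.X : Polynomial K) ^ m * 1))) := rfl
    _ = Polynomial.X ^ m * ev0 K m n f := by
        rw [show ofP K ((Polynomial.X : Polynomial K)^m * 1)
            = ((Polynomial.X : Polynomial K)^m) • (ofP K 1) from rfl]
        rw [map_smul]
        rfl

lemma ev0_homotopy (f g : P K m ⟶ P K n) (H : Homotopy f g) :
    ∃ q : Polynomial K, ev0 K m n f = ev0 K m n g + Polynomial.X ^ n * q := by
  refine ⟨toP K ((toR K (PX_eq K m 0 (Or.inr rfl)) (PX_eq K n (-1) (Or.inl rfl))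
      (H.hom 0 (-1))) (ofP K 1)), ?_⟩
  have h := H.comm 0
  have hd : dNext (0 : ℤ) H.hom = (P K m).d 0 1 ≫ H.hom 1 0 :=
    dNext_eq H.hom (by simp)
  have hp : prevD (0 : ℤ) H.hom = H.hom 0 (-1) ≫ (P K n).d (-1) 0 :=
    prevD_eq H.hom (by simp)
  rw [hd, hp, P_d_eq_zero K m 0 1 (by norm_num), Limits.zero_comp, zero_add] at h
  have h2 := congrArg (toR K (PX_eq K m 0 (Or.inr rfl)) (PX_eq K n 0 (Or.inr rfl))) h
  rw [toR_add, toR_comp K _ (PX_eq K n (-1) (Or.inl rfl)) _ _ _, d_toR] at h2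
  -- h2 : f0 f = (toR hom) ≫ mulX n + f0 g
  have h3 := congrArg (fun u : RMod K ⟶ RMod K => toP K (u (ofP K 1))) h2
  dsimp only at h3
  show toP K ((toR K (PX_eq K m 0 (Or.inr rfl)) (PX_eq K n 0 (Or.inr rfl)) (f.f 0)) (ofP K 1)) = _
  rw [h3]
  show Polynomial.X ^ n * _ + toP K (f0 K m n g (ofP K 1)) = _
  rw [add_comm]
  rfl

def nullHom (q : Polynomial K) : ∀ i j : ℤ, (P K m).X i ⟶ (P K n).X j := fun i j =>
  if h : i = 0 ∧ j = -1 then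
    eqToHom (PX_eq K m i (Or.inr h.1)) ≫ mulP K q ≫ eqToHom (PX_eq K n j (Or.inl h.2)).symm
  else 0

lemma nullHom_00 (q : Polynomial K) : nullHom K m n q 0 (-1) =
    eqToHom (PX_eq K m 0 (Or.inr rfl)) ≫ mulP K q ≫ eqToHom (PX_eq K n (-1) (Or.inl rfl)).symm :=
  dif_pos ⟨rfl, rfl⟩

lemma nullHom_ne (q : Polynomial K) (i j : ℤ) (h : ¬(i = 0 ∧ j = -1)) :
    nullHom K m n q i j = 0 := dif_neg h

lemma null_of (f : P K m ⟶ P K n) (q : Polynomial K)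
    (h0 : f0 K m n f = mulP K q ≫ mulX K n)
    (h1 : f1 K m n f = mulX K m ≫ mulP K q) :
    (Q K).map f = 0 := by
  have hf0 : f.f 0 = eqToHom (PX_eq K m 0 (Or.inr rfl)) ≫ (mulP K q ≫ mulX K n) ≫
      eqToHom (PX_eq K n 0 (Or.inr rfl)).symm := (toR_eq_iff K _ _ _ _).mp h0
  have hf1 : f.f (-1) = eqToHom (PX_eq K m (-1) (Or.inl rfl)) ≫ (mulX K m ≫ mulP K q) ≫
      eqToHom (PX_eq K n (-1) (Or.inl rfl)).symm := (toR_eq_iff K _ _ _ _).mp h1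
  have hd : (P K n).d (-1) 0 = eqToHom (PX_eq K n (-1) (Or.inl rfl)) ≫ mulX K n ≫
      eqToHom (PX_eq K n 0 (Or.inr rfl)).symm := (toR_eq_iff K _ _ _ _).mp (d_toR K n)
  have hdm : (P K m).d (-1) 0 = eqToHom (PX_eq K m (-1) (Or.inl rfl)) ≫ mulX K m ≫
      eqToHom (PX_eq K m 0 (Or.inr rfl)).symm := (toR_eq_iff K _ _ _ _).mp (d_toR K m)
  have H : Homotopy f 0 := {
    hom := nullHom K m n q
    zero := fun i j hn => nullHom_ne K m n q i j (by
      rintro ⟨rfl, rfl⟩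
      exact hn (by simp))
    comm := by
      intro i
      by_cases hi0 : i = 0
      · subst hi0
        rw [dNext_eq _ (show (ComplexShape.up ℤ).Rel 0 1 by simp),
            prevD_eq _ (show (ComplexShape.up ℤ).Rel (-1) 0 by simp),
            P_d_eq_zero K m 0 1 (by norm_num), Limits.zero_comp, nullHom_00, hd, hf0]
        simp
      · by_cases hi1 : i = -1
        · subst hi1
          rw [dNext_eq _ (show (ComplexShape.up ℤ).Rel (-1) 0 by simp),
              prevD_eq _ (show (ComplexShape.up ℤ).Rel (-2) (-1) by simp),
              nullHom_ne K m n q (-1) (-2) (by norm_num), Limits.zero_comp, nullHom_00,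
              hdm, hf1]
          simp
        · rw [dNext_eq _ (show (ComplexShape.up ℤ).Rel i (i+1) by simp),
              prevD_eq _ (show (ComplexShape.up ℤ).Rel (i-1) i by simp),
              nullHom_ne K m n q (i+1) i (by omega),
              nullHom_ne K m n q i (i-1) (by omega),
              Limits.comp_zero, Limits.zero_comp,
              hom_to_punit K n i hi1 hi0 (f.f i)]
          simp }
  rw [HomotopyCategory.eq_of_homotopy f 0 H, Functor.map_zero]

lemma ev1_add (f g : P K m ⟶ P K n) : ev1 K m n (f + g) = ev1 K m n f + ev1 K m n g := rfl
lemma ev1_smul (c : K) (f : P K m ⟶ P K n) : ev1 K m n (c • f) = c • ev1 K m n f := by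
  rw [Polynomial.smul_eq_C_mul]; rfl
lemma ev1_xMap (a b : ℕ) (hab : a + n = b + m) :
    ev1 K m n (xMap K m n a b hab) = Polynomial.X ^ a := by
  show toP K (mulX K a (ofP K 1)) = _
  show Polynomial.X ^ a * 1 = _
  rw [mul_one]

def Ev0 : (P K m ⟶ P K n) →ₗ[K] Polynomial K where
  toFun := ev0 K m n
  map_add' := ev0_add K m n
  map_smul' := ev0_smul K m n

def Ev1 : (P K m ⟶ P K n) →ₗ[K] Polynomial K where
  toFun := ev1 K m n
  map_add' := ev1_add K m n
  map_smul' := ev1_smul K m n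


def xM (i : {i : ℕ // n - m ≤ i ∧ i < n}) : P K m ⟶ P K n :=
  xMap K m n (i.1 + m - n) i.1 (by have := i.2.1; omega)

lemma Q_xM (i : {i : ℕ // n - m ≤ i ∧ i < n}) :
    (Q K).map (xM K m n i) = xbar K m n i.1 i.2.1 := rfl

lemma Ev0_apply (f : P K m ⟶ P K n) : Ev0 K m n f = ev0 K m n f := rfl
lemma Ev1_apply (f : P K m ⟶ P K n) : Ev1 K m n f = ev1 K m n f := rfl

lemma Ev0_xM (i : {i : ℕ // n - m ≤ i ∧ i < n}) :
    Ev0 K m n (xM K m n i) = Polynomial.X ^ i.1 := ev0_xMap K m n (i.1 + m - n) i.1 (by have := i.2.1; omega)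

lemma Ev1_xM (i : {i : ℕ // n - m ≤ i ∧ i < n}) :
    Ev1 K m n (xM K m n i) = Polynomial.X ^ (i.1 + m - n) := ev1_xMap K m n (i.1 + m - n) i.1 (by have := i.2.1; omega)

lemma map_sum_smul (s : Finset {i : ℕ // n - m ≤ i ∧ i < n}) (g : {i : ℕ // n - m ≤ i ∧ i < n} → K) :
    (Q K).map (∑ i ∈ s, g i • xM K m n i) = ∑ i ∈ s, g i • xbar K m n i.1 i.2.1 := by
  rw [Functor.map_sum]
  exact Finset.sum_congr rfl fun i _ => by rw [Functor.map_smul, Q_xM]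

lemma coeff_sum (s : Finset {i : ℕ // n - m ≤ i ∧ i < n}) (g : {i : ℕ // n - m ≤ i ∧ i < n} → K)
    (i0 : {i : ℕ // n - m ≤ i ∧ i < n}) (hi0 : i0 ∈ s) :
    (∑ i ∈ s, g i • (Polynomial.X : Polynomial K) ^ i.1).coeff i0.1 = g i0 := by
  rw [Polynomial.finset_sum_coeff, Finset.sum_eq_single i0]
  · simp [Polynomial.coeff_smul, Polynomial.coeff_X_pow]
  · intro i his hne
    simp only [Polynomial.coeff_smul, Polynomial.coeff_X_pow, smul_eq_mul]
    rw [if_neg (fun h => hne (Subtype.ext h.symm)), mul_zero]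
  · intro h; exact absurd hi0 h

lemma Ev0_sum (s : Finset {i : ℕ // n - m ≤ i ∧ i < n}) (g : {i : ℕ // n - m ≤ i ∧ i < n} → K) :
    ev0 K m n (∑ i ∈ s, g i • xM K m n i) = ∑ i ∈ s, g i • (Polynomial.X : Polynomial K) ^ i.1 := by
  rw [← Ev0_apply, map_sum]
  exact Finset.sum_congr rfl fun i _ => by rw [map_smul, Ev0_xM]

lemma Ev1_sum (s : Finset {i : ℕ // n - m ≤ i ∧ i < n}) (g : {i : ℕ // n - m ≤ i ∧ i < n} → K) :
    ev1 K m n (∑ i ∈ s, g i • xM K m n i)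
      = ∑ i ∈ s, g i • (Polynomial.X : Polynomial K) ^ (i.1 + m - n) := by
  rw [← Ev1_apply, map_sum]
  exact Finset.sum_congr rfl fun i _ => by rw [map_smul, Ev1_xM]

lemma xbar_indep : LinearIndependent K
    (fun i : {i : ℕ // n - m ≤ i ∧ i < n} => xbar K m n i.1 i.2.1) := by
  rw [linearIndependent_iff']
  intro s g hsum i0 hi0
  have hQ : (Q K).map (∑ i ∈ s, g i • xM K m n i) = (Q K).map 0 := by
    rw [map_sum_smul, hsum, Functor.map_zero]
  have H : Homotopy (∑ i ∈ s, g i • xM K m n i) 0 := HomotopyCategory.homotopyOfEq _ _ hQ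
  obtain ⟨q, hq⟩ := ev0_homotopy K m n _ _ H
  rw [ev0_zero, zero_add, Ev0_sum] at hq
  have h0 : (∑ i ∈ s, g i • (Polynomial.X : Polynomial K) ^ i.1).coeff i0.1 = 0 := by
    rw [hq]
    exact Polynomial.X_pow_dvd_iff.mp ⟨q, rfl⟩ i0.1 i0.2.2
  rw [coeff_sum K m n s g i0 hi0] at h0
  exact h0

lemma xbar_span : ⊤ ≤ Submodule.span K
    (Set.range fun i : {i : ℕ // n - m ≤ i ∧ i < n} => xbar K m n i.1 i.2.1) := by
  haveI : Fintype {i : ℕ // n - m ≤ i ∧ i < n} :=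
    Fintype.subtype ((Finset.range n).filter fun j => n - m ≤ j) (by
      intro j
      simp only [Finset.mem_filter, Finset.mem_range]
      tauto)
  intro e _
  obtain ⟨f, hf⟩ := (Q K).map_surjective e
  have hc : Polynomial.X ^ n * ev1 K m n f = Polynomial.X ^ m * ev0 K m n f := ev_comm K m n f
  have hlow : ∀ d, d < n - m → (ev0 K m n f).coeff d = 0 := by
    intro d hd
    have h1 : (Polynomial.X ^ n * ev1 K m n f).coeff (d + m) = 0 :=
      Polynomial.X_pow_dvd_iff.mp ⟨ev1 K m n f, rfl⟩ (d + m) (by omega)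
    rw [hc, Polynomial.coeff_X_pow_mul] at h1
    exact h1
  let c : {i : ℕ // n - m ≤ i ∧ i < n} → K := fun i => (ev0 K m n f).coeff i.1
  let F : P K m ⟶ P K n := ∑ i : {i : ℕ // n - m ≤ i ∧ i < n}, c i • xM K m n i
  have hevF : ev0 K m n F = ∑ i : {i : ℕ // n - m ≤ i ∧ i < n},
      c i • (Polynomial.X : Polynomial K) ^ i.1 := Ev0_sum K m n _ _
  have hdvd : (Polynomial.X : Polynomial K) ^ n ∣ (ev0 K m n f - ev0 K m n F) := by
    rw [Polynomial.X_pow_dvd_iff]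
    intro d hd
    rw [Polynomial.coeff_sub, hevF]
    by_cases hge : n - m ≤ d
    · rw [coeff_sum K m n _ c ⟨d, hge, hd⟩ (Finset.mem_univ _)]
      exact sub_self _
    · rw [Polynomial.finset_sum_coeff, Finset.sum_eq_zero, hlow d (by omega), sub_zero]
      intro i _
      simp only [Polynomial.coeff_smul, Polynomial.coeff_X_pow, smul_eq_mul]
      rw [if_neg (by have := i.2.1; omega), mul_zero]
  obtain ⟨q, hq⟩ := hdvd
  have hsub0 : ev0 K m n (f - F) = ev0 K m n f - ev0 K m n F := map_sub (Ev0 K m n) f F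
  have hsub1 : ev1 K m n (f - F) = ev1 K m n f - ev1 K m n F := map_sub (Ev1 K m n) f F
  have hev0' : ev0 K m n (f - F) = Polynomial.X ^ n * q := by rw [hsub0, hq]
  have hev1' : ev1 K m n (f - F) = Polynomial.X ^ m * q := by
    have hevF1 : ev1 K m n F = ∑ i : {i : ℕ // n - m ≤ i ∧ i < n},
        c i • (Polynomial.X : Polynomial K) ^ (i.1 + m - n) := Ev1_sum K m n _ _
    have hXn : Polynomial.X ^ n * ev1 K m n F = Polynomial.X ^ m * ev0 K m n F := by
      rw [hevF1, hevF, Finset.mul_sum, Finset.mul_sum]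
      refine Finset.sum_congr rfl fun i _ => ?_
      rw [mul_smul_comm, mul_smul_comm, ← pow_add, ← pow_add,
        show n + (i.1 + m - n) = m + i.1 by have := i.2.1; omega]
    have key : Polynomial.X ^ n * ev1 K m n (f - F) =
        Polynomial.X ^ n * (Polynomial.X ^ m * q) := by
      rw [hsub1, mul_sub, hXn, hc, ← mul_sub, hq]
      ring
    exact mul_left_cancel₀ (pow_ne_zero n Polynomial.X_ne_zero) key
  have hnull : (Q K).map (f - F) = 0 := by
    refine null_of K m n (f - F) q ?_ ?_
    · rw [show mulX K n = mulP K (Polynomial.X ^ n) from rfl, mulP_comp, ← hev0']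
      exact homRMod_eq K _
    · rw [show mulX K m = mulP K (Polynomial.X ^ m) from rfl, mulP_comp,
        show q * Polynomial.X ^ m = Polynomial.X ^ m * q from mul_comm _ _, ← hev1']
      exact homRMod_eq K _
  have he : e = (Q K).map F := by
    rw [← hf, ← sub_eq_zero, ← Functor.map_sub]
    exact hnull
  rw [he, show F = ∑ i : {i : ℕ // n - m ≤ i ∧ i < n}, c i • xM K m n i from rfl, map_sum_smul]
  exact Submodule.sum_mem _ fun i _ =>
    Submodule.smul_mem _ _ (Submodule.subset_span ⟨i, rfl⟩)
/-- `{x^i_{m,n} : max (0, n-m) ≤ i < n}` is a `K`-basis of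
`Hom_{K^b(proj R)}(P m, P n)`. -/
theorem xbar_basis (m n : ℕ) (hm : 0 < m) (hn : 0 < n) :
    ∃ b : Module.Basis {i : ℕ // n - m ≤ i ∧ i < n} K (Pbar K m ⟶ Pbar K n),
      ∀ i : {i : ℕ // n - m ≤ i ∧ i < n}, b i = xbar K m n i.1 i.2.1 := by
  exact ⟨Module.Basis.mk (xbar_indep K m n) (xbar_span K m n), fun i => Module.Basis.mk_apply _ _ _⟩
end
end

section
/- Let T be a triangulated category and suppose given a commutative octahedron diagram on composable morphisms f: A → B, g: B → C with h = g∘f, distinguished triangles (A,f,B,f',D,f''), (A,h,C,h',E,h''), (B,g,C,g',F,g''), (D,k,E,k',F,k'' = f'[1]∘g''), and l = h'∘g = k∘f', l' = f[1]∘h'' = g''∘k'. If ε: E → E satisfies ε² = 0, ε∘l = 0, l'∘ε = 0, h''∘ε∘k = 0, and k'∘ε∘h' = 0, then replacing k by (1+ε)∘k and k' by k'∘(1-ε) (keeping all other maps unchanged) again yields a commutative octahedron; in particular the triangle (D, (1+ε)∘k, E, k'∘(1-ε), F, k'') is distinguished. -/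
open CategoryTheory CategoryTheory.Limits CategoryTheory.Pretriangulated

/-- deforming an octahedron by `ε : E ⟶ E` with `ε² = 0`, `ε ∘ l = 0`,
`l' ∘ ε = 0`, `h'' ∘ ε ∘ k = 0`, `k' ∘ ε ∘ h' = 0`: replacing `k` by `(1+ε) ∘ k` and
`k'` by `k' ∘ (1-ε)` again yields a commutative octahedron; in particular the triangle
`(D, (1+ε)∘k, E, k'∘(1-ε), F, k'')` is distinguished. -/
theorem octahedron_deformation {T : Type*} [Category T] [Preadditive T] [HasZeroObject T]
    [HasShift T ℤ] [∀ n : ℤ, (shiftFunctor T n).Additive] [Pretriangulated T]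
    {A B C D E F : T}
    (f : A ⟶ B) (g : B ⟶ C) (h : A ⟶ C) (hcomp : f ≫ g = h)
    (f' : B ⟶ D) (f'' : D ⟶ A⟦(1 : ℤ)⟧) (h' : C ⟶ E) (h'' : E ⟶ A⟦(1 : ℤ)⟧)
    (g' : C ⟶ F) (g'' : F ⟶ B⟦(1 : ℤ)⟧) (k : D ⟶ E) (k' : E ⟶ F)
    (l : B ⟶ E) (l' : E ⟶ B⟦(1 : ℤ)⟧)
    (hT1 : Triangle.mk f f' f'' ∈ distTriang T)
    (hT2 : Triangle.mk h h' h'' ∈ distTriang T)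
    (hT3 : Triangle.mk g g' g'' ∈ distTriang T)
    (hT4 : Triangle.mk k k' (g'' ≫ f'⟦(1 : ℤ)⟧') ∈ distTriang T)
    (hl₁ : l = g ≫ h') (hl₂ : l = f' ≫ k)
    (hl'₁ : l' = h'' ≫ f⟦(1 : ℤ)⟧') (hl'₂ : l' = k' ≫ g'')
    (hk₁ : k ≫ h'' = f'') (hk₂ : h' ≫ k' = g')
    (ε : E ⟶ E) (hε2 : ε ≫ ε = 0) (hεl : l ≫ ε = 0) (hl'ε : ε ≫ l' = 0)
    (hεk : k ≫ ε ≫ h'' = 0) (hεh' : h' ≫ ε ≫ k' = 0) :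
    (Triangle.mk (k ≫ (𝟙 E + ε)) ((𝟙 E - ε) ≫ k') (g'' ≫ f'⟦(1 : ℤ)⟧') ∈ distTriang T) ∧
    l = f' ≫ (k ≫ (𝟙 E + ε)) ∧
    (k ≫ (𝟙 E + ε)) ≫ h'' = f'' ∧
    h' ≫ ((𝟙 E - ε) ≫ k') = g' ∧
    l' = ((𝟙 E - ε) ≫ k') ≫ g'' := by
  refine ⟨?_, ?_, ?_, ?_, ?_⟩
  · refine isomorphic_distinguished _ hT4 _ (Iso.symm ?_)
    refine Triangle.isoMk _ _ (Iso.refl D)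
      (⟨𝟙 E + ε, 𝟙 E - ε, ?_, ?_⟩ : E ≅ E) (Iso.refl F) ?_ ?_ ?_
    · simp only [Preadditive.comp_add, Preadditive.comp_sub, Preadditive.add_comp,
        Preadditive.sub_comp, Category.comp_id, Category.id_comp, hε2]
      abel
    · simp only [Preadditive.comp_add, Preadditive.comp_sub, Preadditive.add_comp,
        Preadditive.sub_comp, Category.comp_id, Category.id_comp, hε2]
      abel
    · change k ≫ (𝟙 E + ε) = 𝟙 D ≫ k ≫ (𝟙 E + ε)
      simp
    · change k' ≫ 𝟙 F = (𝟙 E + ε) ≫ (𝟙 E - ε) ≫ k'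
      simp only [Preadditive.add_comp, Preadditive.sub_comp, Preadditive.comp_sub,
        Preadditive.comp_add, Category.id_comp, Category.comp_id, Category.assoc, hε2]
      simp [reassoc_of% hε2]
    · change (g'' ≫ f'⟦(1 : ℤ)⟧') ≫ (𝟙 D)⟦(1 : ℤ)⟧' = 𝟙 F ≫ g'' ≫ f'⟦(1 : ℤ)⟧'
      simp
  · rw [hl₂, ← Category.assoc, ← hl₂]
    simp [Preadditive.comp_add, hεl]
  · simp only [Category.assoc, Preadditive.add_comp, Category.id_comp,
      Preadditive.comp_add, hεk, hk₁]
    simp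
  · simp only [← Category.assoc, Preadditive.sub_comp, Category.id_comp,
      Preadditive.comp_sub, Category.assoc, hεh', hk₂]
    simp
  · rw [Category.assoc, ← hl'₂]
    simp [Preadditive.sub_comp, hl'ε]
end

section
/- Let T be a triangulated category and suppose given an octahedron as in the octahedral axiom for f: A → B, g: B → C, with the standard notation (triangles on f, g, h = g∘f, and on k: D → E, plus diagonals l, l'). Suppose moreover the octahedron is good, meaning the triangles B --l--> E --(k', -h'')^T--> F ⊕ A[1] --(g'', f[1])--> B[1] and B --(g, f')^T--> C ⊕ D --(h', -k)--> E --l'--> B[1] are distinguished. If ε: E → E satisfies ε² = 0 and the compatibilities ε∘l = 0, l'∘ε = 0, h''∘ε∘k = 0, k'∘ε∘h' = 0, and if there exist nilpotent ε', ε'': E → E with ε'∘l = 0, h''∘ε' = 0, k'∘(ε' - ε) = 0, l'∘ε'' = 0, ε''∘h' = 0, (ε'' - ε)∘k = 0, then the modified octahedron with k replaced by (1+ε)∘k and k' replaced by k'∘(1-ε) is also good. -/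
open CategoryTheory CategoryTheory.Limits CategoryTheory.Pretriangulated

/-- if the octahedron is good and `ε, ε', ε''` are as stated, then the
octahedron deformed by `ε` (with `k` replaced by `(1+ε) ∘ k` and `k'` by `k' ∘ (1-ε)`)
is also good. -/
theorem octahedron_deformation_good {T : Type*} [Category T] [Preadditive T]
    [HasZeroObject T] [HasShift T ℤ] [∀ n : ℤ, (shiftFunctor T n).Additive]
    [Pretriangulated T] [HasBinaryBiproducts T]
    {A B C D E F : T}
    (f : A ⟶ B) (g : B ⟶ C) (h : A ⟶ C) (hcomp : f ≫ g = h)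
    (f' : B ⟶ D) (f'' : D ⟶ A⟦(1 : ℤ)⟧) (h' : C ⟶ E) (h'' : E ⟶ A⟦(1 : ℤ)⟧)
    (g' : C ⟶ F) (g'' : F ⟶ B⟦(1 : ℤ)⟧) (k : D ⟶ E) (k' : E ⟶ F)
    (l : B ⟶ E) (l' : E ⟶ B⟦(1 : ℤ)⟧)
    (hT1 : Triangle.mk f f' f'' ∈ distTriang T)
    (hT2 : Triangle.mk h h' h'' ∈ distTriang T)
    (hT3 : Triangle.mk g g' g'' ∈ distTriang T)
    (hT4 : Triangle.mk k k' (g'' ≫ f'⟦(1 : ℤ)⟧') ∈ distTriang T)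
    (hl₁ : l = g ≫ h') (hl₂ : l = f' ≫ k)
    (hl'₁ : l' = h'' ≫ f⟦(1 : ℤ)⟧') (hl'₂ : l' = k' ≫ g'')
    (hk₁ : k ≫ h'' = f'') (hk₂ : h' ≫ k' = g')
    (hgood₁ : Triangle.mk l (biprod.lift k' (-h'')) (biprod.desc g'' (f⟦(1 : ℤ)⟧'))
      ∈ distTriang T)
    (hgood₂ : Triangle.mk (biprod.lift g f') (biprod.desc h' (-k)) l' ∈ distTriang T)
    (ε : E ⟶ E) (hε2 : ε ≫ ε = 0) (hεl : l ≫ ε = 0) (hl'ε : ε ≫ l' = 0)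
    (hεk : k ≫ ε ≫ h'' = 0) (hεh' : h' ≫ ε ≫ k' = 0)
    (ε' : E ⟶ E) (hε'nil : @IsNilpotent (CategoryTheory.End E) _ _ ε')
    (hε'l : l ≫ ε' = 0) (hε'h'' : ε' ≫ h'' = 0) (hε'ε : (ε' - ε) ≫ k' = 0)
    (ε'' : E ⟶ E) (hε''nil : @IsNilpotent (CategoryTheory.End E) _ _ ε'')
    (hε''l' : ε'' ≫ l' = 0) (hε''h' : h' ≫ ε'' = 0) (hε''ε : k ≫ (ε'' - ε) = 0) :
    (Triangle.mk (k ≫ (𝟙 E + ε)) ((𝟙 E - ε) ≫ k') (g'' ≫ f'⟦(1 : ℤ)⟧')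
      ∈ distTriang T) ∧
    (Triangle.mk l (biprod.lift ((𝟙 E - ε) ≫ k') (-h'')) (biprod.desc g'' (f⟦(1 : ℤ)⟧'))
      ∈ distTriang T) ∧
    (Triangle.mk (biprod.lift g f') (biprod.desc h' (-(k ≫ (𝟙 E + ε)))) l'
      ∈ distTriang T) := by

  have sub1 : ε' ≫ k' = ε ≫ k' := by
    have := hε'ε; rw [Preadditive.sub_comp, sub_eq_zero] at this; exact this
  have sub2 : k ≫ ε'' = k ≫ ε := by
    have := hε''ε; rw [Preadditive.comp_sub, sub_eq_zero] at this; exact this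
  have hinv1 : (𝟙 E + ε) ≫ (𝟙 E - ε) = 𝟙 E := by
    simp only [Preadditive.add_comp, Preadditive.comp_sub, Category.id_comp,
      Category.comp_id, hε2]
    abel
  have hinv2 : (𝟙 E - ε) ≫ (𝟙 E + ε) = 𝟙 E := by
    simp only [Preadditive.sub_comp, Preadditive.comp_add, Category.id_comp,
      Category.comp_id, hε2]
    abel
  have i2 : IsIso (𝟙 E - ε') := by
    have h := hε'nil.isUnit_one_sub
    rw [isUnit_iff_isIso] at h
    exact h
  have i3 : IsIso (𝟙 E + ε'') := by
    have h := hε''nil.isUnit_one_add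
    rw [isUnit_iff_isIso] at h
    exact h
  refine ⟨?_, ?_, ?_⟩
  · refine isomorphic_distinguished _ hT4 _ (Triangle.isoMk _ _ (Iso.refl D)
      (Iso.mk (𝟙 E - ε : E ⟶ E) (𝟙 E + ε : E ⟶ E) hinv2 hinv1) (Iso.refl F) ?_ ?_ ?_)
    · dsimp
      show (k ≫ (𝟙 E + ε)) ≫ (𝟙 E - ε) = 𝟙 D ≫ k
      rw [Category.assoc, hinv1, Category.comp_id, Category.id_comp]
    · show ((𝟙 E - ε) ≫ k') ≫ 𝟙 F = (𝟙 E - ε) ≫ k'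
      simp
    · show (g'' ≫ f'⟦(1 : ℤ)⟧') ≫ (𝟙 D)⟦(1 : ℤ)⟧' = 𝟙 F ≫ g'' ≫ f'⟦(1 : ℤ)⟧'
      simp
  · refine isomorphic_distinguished _ hgood₁ _ (Triangle.isoMk _ _ (Iso.refl B)
      (@asIso _ _ _ _ (𝟙 E - ε') i2) (Iso.refl _) ?_ ?_ ?_)
    · dsimp
      show l ≫ (𝟙 E - ε') = 𝟙 B ≫ l
      simp [Preadditive.comp_sub, hε'l]
    · dsimp
      show biprod.lift ((𝟙 E - ε) ≫ k') (-h'') ≫ 𝟙 _ = (𝟙 E - ε') ≫ biprod.lift k' (-h'')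
      apply biprod.hom_ext
      · simp [Preadditive.sub_comp, sub1]
      · simp [Preadditive.sub_comp, hε'h'']
    · show biprod.desc g'' (f⟦(1 : ℤ)⟧') ≫ (𝟙 B)⟦(1 : ℤ)⟧' = 𝟙 _ ≫ biprod.desc g'' (f⟦(1 : ℤ)⟧')
      simp
  · refine isomorphic_distinguished _ hgood₂ _ (Triangle.isoMk _ _ (Iso.refl B)
      (Iso.refl _) (@asIso _ _ _ _ (𝟙 E + ε'') i3).symm ?_ ?_ ?_)
    · show biprod.lift g f' ≫ 𝟙 _ = 𝟙 B ≫ biprod.lift g f'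
      simp
    · dsimp
      show biprod.desc h' (-(k ≫ (𝟙 E + ε))) ≫ inv (𝟙 E + ε'') = 𝟙 _ ≫ biprod.desc h' (-k)
      rw [IsIso.comp_inv_eq, Category.id_comp]
      apply biprod.hom_ext'
      · simp only [biprod.inl_desc, biprod.inl_desc_assoc, Preadditive.comp_add,
          Category.comp_id, hε''h', add_zero]
      · simp only [biprod.inr_desc, biprod.inr_desc_assoc, Preadditive.neg_comp,
          Preadditive.comp_add, Category.comp_id, sub2]
        abel
    · dsimp
      show l' ≫ (𝟙 B)⟦(1 : ℤ)⟧' = inv (𝟙 E + ε'') ≫ l'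
      rw [IsIso.eq_inv_comp]
      simp [Preadditive.add_comp, hε''l']
end

section
/- Let S be a K-linear triangulated category with a full and strong exceptional sequence (A, B, C) with one-dimensional Hom spaces Hom(A,B) = Kf, Hom(B,C) = Kg, Hom(A,C) = Kh, h = g∘f ≠ 0, and let D, E, F be cones of f, h, g fitting into an octahedron with standard notation. Then for distinct X, Y ∈ {A, B, C, D, E, F} and n ∈ ℤ, Hom(X, Y[n]) vanishes except in exactly the fourteen cases: Hom(A,B) = Kf, Hom(A,C) = Kh, Hom(B,C) = Kg, Hom(B,D) = Kf', Hom(B,E) = Kl, Hom(C,E) = Kh', Hom(C,F) = Kg', Hom(D,E) = Kk, Hom(D,A[1]) = Kf'', Hom(E,F) = Kk', Hom(E,A[1]) = Kh'', Hom(E,B[1]) = Kl', Hom(F,B[1]) = Kg'', Hom(F,D[1]) = Kk''; moreover each indecomposable object X[n] is exceptional. -/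
open CategoryTheory CategoryTheory.Limits CategoryTheory.Pretriangulated

namespace HomAux

set_option linter.unusedSectionVars false

variable {S : Type*} [Category S] [Preadditive S] [HasZeroObject S]
    [HasShift S ℤ] [∀ n : ℤ, (shiftFunctor S n).Additive] [Pretriangulated S]

/-- transport vanishing along isos: `P ≅ X`, `Q ≅ Y`. -/
lemma van_iso {X Y P Q : S} (eP : P ≅ X) (eQ : Q ≅ Y)
    (hv : ∀ u : X ⟶ Y, u = 0) : ∀ u : P ⟶ Q, u = 0 := by
  intro u
  have h : eP.inv ≫ u ≫ eQ.hom = 0 := hv _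
  have h2 : u = eP.hom ≫ (eP.inv ≫ u ≫ eQ.hom) ≫ eQ.inv := by simp
  rw [h2, h, zero_comp, comp_zero]

/-- the canonical iso `X⟦a⟧⟦b⟧ ≅ X⟦a+b⟧`. -/
noncomputable def sAdd (X : S) (a b : ℤ) : (X⟦a⟧)⟦b⟧ ≅ X⟦a+b⟧ :=
  ((shiftFunctorAdd' S a b (a+b) rfl).app X).symm

/-- the canonical iso `X⟦0⟧ ≅ X`. -/
noncomputable def sZero (X : S) : X⟦(0:ℤ)⟧ ≅ X := (shiftFunctorZero S ℤ).app X

/-- master transport: from `Hom(X, Y⟦m⟧) = 0` deduce `Hom(P,Q) = 0` whenever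
`P ≅ X⟦a⟧`, `Q ≅ Y⟦b⟧`, `m + a = b`. -/
lemma vanT {X Y : S} {m : ℤ} (hv : ∀ u : X ⟶ Y⟦m⟧, u = 0)
    {P Q : S} (a b : ℤ) (eP : P ≅ X⟦a⟧) (eQ : Q ≅ Y⟦b⟧) (hab : m + a = b) :
    ∀ u : P ⟶ Q, u = 0 := by
  have base : ∀ u : X⟦a⟧ ⟶ Y⟦b⟧, u = 0 := by
    intro u
    have e : Y⟦b⟧ ≅ (Y⟦m⟧)⟦a⟧ := (shiftFunctorAdd' S m a b hab).app Y
    obtain ⟨v, hv'⟩ := (shiftFunctor S a).map_surjective (u ≫ e.hom)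
    have hv0 : v = 0 := hv v
    have h1 : u ≫ e.hom = 0 := by rw [← hv', hv0, Functor.map_zero]
    calc u = (u ≫ e.hom) ≫ e.inv := by simp
    _ = 0 := by rw [h1, zero_comp]
  exact van_iso eP eQ base

lemma vanPlain {X Y : S} (hv : ∀ u : X ⟶ Y⟦(0:ℤ)⟧, u = 0) : ∀ u : X ⟶ Y, u = 0 :=
  van_iso (Iso.refl X) (sZero Y).symm hv

lemma vanPlain' {X Y : S} (hv : ∀ u : X ⟶ Y, u = 0) : ∀ u : X ⟶ Y⟦(0:ℤ)⟧, u = 0 :=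
  van_iso (Iso.refl X) (sZero Y) hv

/-- convert `Hom(X⟦1⟧, Y) = 0` into `Hom(X, Y⟦-1⟧) = 0`. -/
lemma vanDown {X Y : S} (hv : ∀ w : X⟦(1:ℤ)⟧ ⟶ Y, w = 0) :
    ∀ u : X ⟶ Y⟦(-1:ℤ)⟧, u = 0 := by
  intro u
  set e := (shiftFunctorCompIsoId S (-1) 1 (by norm_num)).app Y with he
  have h1 : u⟦(1:ℤ)⟧' ≫ e.hom = 0 := hv _
  have h2 : u⟦(1:ℤ)⟧' = 0 := by
    calc u⟦(1:ℤ)⟧' = (u⟦(1:ℤ)⟧' ≫ e.hom) ≫ e.inv := by simp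
    _ = 0 := by rw [h1, zero_comp]
  exact (shiftFunctor S (1:ℤ)).map_injective (by rw [h2, Functor.map_zero])

lemma smul_cancel {K : Type*} [Field K] [Linear K S] {X Y : S} {c : K} {v : X ⟶ Y}
    (h : c • v = 0) (hv : v ≠ 0) : c = 0 := by
  by_contra hc
  exact hv (by calc v = c⁻¹ • (c • v) := by rw [smul_smul, inv_mul_cancel₀ hc, one_smul]
    _ = 0 := by rw [h, smul_zero])

/-- vanishing of Homs into a shifted cone, covariant version. -/
lemma vanConeCo (T : Triangle S) (hT : T ∈ distTriang S) (W : S) (n : ℤ)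
    (h2 : ∀ u : W ⟶ T.obj₂⟦n⟧, u = 0) (h1 : ∀ u : W ⟶ T.obj₁⟦n+1⟧, u = 0) :
    ∀ u : W ⟶ T.obj₃⟦n⟧, u = 0 := by
  intro u
  have hTn := Triangle.shift_distinguished T hT n
  have hu3 : u ≫ ((shiftFunctor (Triangle S) n).obj T).mor₃ = 0 :=
    van_iso (Iso.refl W) (sAdd T.obj₁ n 1) h1 _
  obtain ⟨v, hv'⟩ := Triangle.coyoneda_exact₃ _ hTn u hu3
  erw [hv', h2 v, zero_comp]; rfl

/-- vanishing of Homs out of a cone, contravariant version (unshifted cone). -/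
lemma vanConeYo (T : Triangle S) (hT : T ∈ distTriang S) (X : S)
    (h2 : ∀ u : T.obj₂ ⟶ X, u = 0) (h1 : ∀ u : T.obj₁⟦(1:ℤ)⟧ ⟶ X, u = 0) :
    ∀ u : T.obj₃ ⟶ X, u = 0 := by
  intro u
  obtain ⟨w, hw⟩ := Triangle.yoneda_exact₃ _ hT u (h2 _)
  rw [hw, h1 w, comp_zero]

end HomAux

namespace HomAux

set_option linter.unusedSectionVars false

variable {S : Type*} [Category S] [Preadditive S] [HasZeroObject S]
    [HasShift S ℤ] [∀ n : ℤ, (shiftFunctor S n).Additive] [Pretriangulated S]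

lemma notIsZero_shift {X : S} (h : ¬ IsZero X) (n : ℤ) : ¬ IsZero (X⟦n⟧) := by
  intro hz
  refine h ?_
  rw [IsZero.iff_id_eq_zero] at hz ⊢
  have : (𝟙 X)⟦n⟧' = (0 : X ⟶ X)⟦n⟧' := by
    rw [CategoryTheory.Functor.map_id, CategoryTheory.Functor.map_zero]; exact hz
  exact (shiftFunctor S n).map_injective this

lemma mor₃_ne_zero (T : Triangle S) (hT : T ∈ distTriang S)
    (hv : ∀ u : T.obj₂ ⟶ T.obj₁, u = 0) (hnz : ¬ IsZero T.obj₁) : T.mor₃ ≠ 0 := by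
  intro h0
  have hR := rot_of_distTriang _ hT
  obtain ⟨gq, hgq⟩ := Triangle.yoneda_exact₃ _ hR (𝟙 (T.obj₁⟦(1:ℤ)⟧))
    (by show T.mor₃ ≫ 𝟙 _ = 0; rw [h0, zero_comp])
  obtain ⟨r, hr⟩ := (shiftFunctor S (1:ℤ)).map_surjective gq
  have : (𝟙 T.obj₁)⟦(1:ℤ)⟧' = (-(T.mor₁ ≫ r))⟦(1:ℤ)⟧' := by
    erw [CategoryTheory.Functor.map_id, CategoryTheory.Functor.map_neg,
      CategoryTheory.Functor.map_comp, hr]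
    show 𝟙 _ = -(T.mor₁⟦(1:ℤ)⟧' ≫ gq)
    rw [hgq]; show T.rotate.mor₃ ≫ gq = _
    show (-T.mor₁⟦(1:ℤ)⟧') ≫ gq = _
    erw [Preadditive.neg_comp]
  have h1 : 𝟙 T.obj₁ = -(T.mor₁ ≫ r) := (shiftFunctor S (1:ℤ)).map_injective this
  rw [hv r, comp_zero, neg_zero] at h1
  exact hnz (by rw [IsZero.iff_id_eq_zero]; exact h1)

section Lin
variable {K : Type*} [Field K] [Linear K S]

lemma endIso {X Y : S} (e : X ≅ Y) (hEnd : ∀ u : X ⟶ X, ∃ c : K, u = c • 𝟙 X) :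
    ∀ u : Y ⟶ Y, ∃ c : K, u = c • 𝟙 Y := by
  intro u
  obtain ⟨c, hc⟩ := hEnd (e.hom ≫ u ≫ e.inv)
  refine ⟨c, ?_⟩
  have h2 : e.inv ≫ (e.hom ≫ u ≫ e.inv) ≫ e.hom = u := by simp
  rw [← h2, hc]; simp

/-- End(obj₂) from End(obj₃). -/
lemma endLemma₂ (T : Triangle S) (hT : T ∈ distTriang S)
    (hEnd₃ : ∀ u : T.obj₃ ⟶ T.obj₃, ∃ c : K, u = c • 𝟙 T.obj₃)
    (hv1 : ∀ u : T.obj₁ ⟶ T.obj₃, u = 0)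
    (hv2 : ∀ u : T.obj₂ ⟶ T.obj₁, u = 0) :
    ∀ u : T.obj₂ ⟶ T.obj₂, ∃ c : K, u = c • 𝟙 T.obj₂ := by
  have hspan : ∀ v : T.obj₂ ⟶ T.obj₃, ∃ c : K, v = c • T.mor₂ := by
    intro v
    obtain ⟨w, hw⟩ := Triangle.yoneda_exact₂ T hT v (hv1 _)
    obtain ⟨c, hc⟩ := hEnd₃ w
    exact ⟨c, by rw [hw, hc, Linear.comp_smul, Category.comp_id]⟩
  intro u
  obtain ⟨c, hc⟩ := hspan (u ≫ T.mor₂)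
  have h0 : (u - c • 𝟙 T.obj₂) ≫ T.mor₂ = 0 := by
    rw [Preadditive.sub_comp, hc, Linear.smul_comp, Category.id_comp, sub_self]
  obtain ⟨b, hb⟩ := Triangle.coyoneda_exact₂ T hT _ h0
  rw [hv2 b, zero_comp] at hb
  exact ⟨c, by rw [← sub_eq_zero]; exact hb⟩

/-- End(obj₃) from End(obj₂). -/
lemma endLemma₃ (T : Triangle S) (hT : T ∈ distTriang S)
    (hEnd₂ : ∀ u : T.obj₂ ⟶ T.obj₂, ∃ c : K, u = c • 𝟙 T.obj₂)
    (hv1 : ∀ u : T.obj₂ ⟶ T.obj₁⟦(1:ℤ)⟧, u = 0)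
    (hv2 : ∀ u : T.obj₁⟦(1:ℤ)⟧ ⟶ T.obj₃, u = 0) :
    ∀ u : T.obj₃ ⟶ T.obj₃, ∃ c : K, u = c • 𝟙 T.obj₃ := by
  have hspan : ∀ v : T.obj₂ ⟶ T.obj₃, ∃ c : K, v = c • T.mor₂ := by
    intro v
    obtain ⟨w, hw⟩ := Triangle.coyoneda_exact₃ T hT v (hv1 _)
    obtain ⟨c, hc⟩ := hEnd₂ w
    exact ⟨c, by rw [hw, hc, Linear.smul_comp, Category.id_comp]⟩
  intro u
  obtain ⟨c, hc⟩ := hspan (T.mor₂ ≫ u)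
  have h0 : T.mor₂ ≫ (u - c • 𝟙 T.obj₃) = 0 := by
    rw [Preadditive.comp_sub, hc, Linear.comp_smul, Category.comp_id, sub_self]
  obtain ⟨w, hw⟩ := Triangle.yoneda_exact₃ T hT _ h0
  rw [hv2 w, comp_zero] at hw
  exact ⟨c, by rw [← sub_eq_zero]; exact hw⟩

/-- End(obj₃) from End(obj₁⟦1⟧). -/
lemma endLemma₃' (T : Triangle S) (hT : T ∈ distTriang S)
    (hEnd₁ : ∀ u : T.obj₁⟦(1:ℤ)⟧ ⟶ T.obj₁⟦(1:ℤ)⟧, ∃ c : K, u = c • 𝟙 (T.obj₁⟦(1:ℤ)⟧))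
    (hv1 : ∀ u : T.obj₂ ⟶ T.obj₁⟦(1:ℤ)⟧, u = 0)
    (hv2 : ∀ u : T.obj₃ ⟶ T.obj₂, u = 0) :
    ∀ u : T.obj₃ ⟶ T.obj₃, ∃ c : K, u = c • 𝟙 T.obj₃ := by
  have hspan : ∀ v : T.obj₃ ⟶ T.obj₁⟦(1:ℤ)⟧, ∃ c : K, v = c • T.mor₃ := by
    intro v
    obtain ⟨w, hw⟩ := Triangle.yoneda_exact₃ T hT v (hv1 _)
    obtain ⟨c, hc⟩ := hEnd₁ w
    exact ⟨c, by rw [hw, hc, Linear.comp_smul, Category.comp_id]⟩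
  intro u
  obtain ⟨c, hc⟩ := hspan (u ≫ T.mor₃)
  have h0 : (u - c • 𝟙 T.obj₃) ≫ T.mor₃ = 0 := by
    rw [Preadditive.sub_comp, hc, Linear.smul_comp, Category.id_comp, sub_self]
  obtain ⟨b, hb⟩ := Triangle.coyoneda_exact₃ T hT _ h0
  rw [hv2 b, zero_comp] at hb
  exact ⟨c, by rw [← sub_eq_zero]; exact hb⟩

/-- End(obj₁) from End(obj₂). -/
lemma endLemma₁ (T : Triangle S) (hT : T ∈ distTriang S)
    (hEnd₂ : ∀ u : T.obj₂ ⟶ T.obj₂, ∃ c : K, u = c • 𝟙 T.obj₂)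
    (hv1 : ∀ u : T.obj₃⟦(-1:ℤ)⟧ ⟶ T.obj₂, u = 0)
    (hv2 : ∀ u : T.obj₁ ⟶ T.obj₃⟦(-1:ℤ)⟧, u = 0) :
    ∀ u : T.obj₁ ⟶ T.obj₁, ∃ c : K, u = c • 𝟙 T.obj₁ := by
  have hIR := inv_rot_of_distTriang _ hT
  have hspan : ∀ v : T.obj₁ ⟶ T.obj₂, ∃ c : K, v = c • T.mor₁ := by
    intro v
    obtain ⟨w, hw⟩ := Triangle.yoneda_exact₂ _ hIR v (hv1 _)
    obtain ⟨c, hc⟩ := hEnd₂ w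
    exact ⟨c, by rw [hw, hc]; erw [Linear.comp_smul, Category.comp_id]; rfl⟩
  intro u
  obtain ⟨c, hc⟩ := hspan (u ≫ T.mor₁)
  have h0 : (u - c • 𝟙 T.obj₁) ≫ T.invRotate.mor₂ = 0 := by
    show (u - c • 𝟙 T.obj₁) ≫ T.mor₁ = 0
    rw [Preadditive.sub_comp, hc, Linear.smul_comp, Category.id_comp, sub_self]
  obtain ⟨b, hb⟩ := Triangle.coyoneda_exact₂ _ hIR _ h0
  erw [hv2 b, zero_comp] at hb
  exact ⟨c, by rw [← sub_eq_zero]; exact hb⟩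

end Lin
end HomAux

namespace HomAux

set_option linter.unusedSectionVars false

variable {S : Type*} [Category S] [Preadditive S] [HasZeroObject S]
    [HasShift S ℤ] [∀ n : ℤ, (shiftFunctor S n).Additive] [Pretriangulated S]
    {K : Type*} [Field K] [Linear K S]

/-- vanishing of `Hom(W, obj₃)` when `Hom(W,obj₂)` is spanned by `p` with `p ≫ mor₂ = 0`. -/
lemma vanCone0 (T : Triangle S) (hT : T ∈ distTriang S) {W : S} (p : W ⟶ T.obj₂)
    (hgen : ∀ v : W ⟶ T.obj₂, ∃ c : K, v = c • p)
    (hp0 : p ≫ T.mor₂ = 0)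
    (hv1 : ∀ u : W ⟶ T.obj₁⟦(1:ℤ)⟧, u = 0) :
    ∀ u : W ⟶ T.obj₃, u = 0 := by
  intro u
  obtain ⟨v, hv⟩ := Triangle.coyoneda_exact₃ _ hT u (hv1 _)
  obtain ⟨c, hc⟩ := hgen v
  rw [hv, hc, Linear.smul_comp, hp0, smul_zero]

/-- vanishing of `Hom(W⟦1⟧, obj₃)` when `Hom(W,obj₁)` is spanned by `p` with
`p ≫ mor₁ ≠ 0` and `Hom(W⟦1⟧, obj₂) = 0`. -/
lemma vanShiftOneCone (T : Triangle S) (hT : T ∈ distTriang S) {W : S} (p : W ⟶ T.obj₁)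
    (hgen : ∀ v : W ⟶ T.obj₁, ∃ c : K, v = c • p)
    (hp : p ≫ T.mor₁ ≠ 0)
    (hv2 : ∀ u : W⟦(1:ℤ)⟧ ⟶ T.obj₂, u = 0) :
    ∀ u : W⟦(1:ℤ)⟧ ⟶ T.obj₃, u = 0 := by
  intro u
  obtain ⟨v, hv⟩ := (shiftFunctor S (1:ℤ)).map_surjective (u ≫ T.mor₃)
  obtain ⟨c, hc⟩ := hgen v
  have hz : (c • (p ≫ T.mor₁))⟦(1:ℤ)⟧' = 0 := by
    calc (c • (p ≫ T.mor₁))⟦(1:ℤ)⟧' = ((c • p) ≫ T.mor₁)⟦(1:ℤ)⟧' := by rw [Linear.smul_comp]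
    _ = v⟦(1:ℤ)⟧' ≫ T.mor₁⟦(1:ℤ)⟧' := by rw [← hc, CategoryTheory.Functor.map_comp]
    _ = (u ≫ T.mor₃) ≫ T.mor₁⟦(1:ℤ)⟧' := by rw [hv]
    _ = 0 := by rw [Category.assoc, comp_distTriang_mor_zero₃₁ _ hT, comp_zero]
  have hc0 : c = 0 := smul_cancel
    ((shiftFunctor S (1:ℤ)).map_injective
      (by rw [hz, CategoryTheory.Functor.map_zero])) hp
  have h4 : u ≫ T.mor₃ = 0 := by
    rw [← hv, hc, hc0, zero_smul, CategoryTheory.Functor.map_zero]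
  obtain ⟨w, hw⟩ := Triangle.coyoneda_exact₃ _ hT u h4
  rw [hw, hv2 w, zero_comp]

/-- vanishing of `Hom(obj₃, X)` when `Hom(obj₂, X)` is spanned by `p` with
`mor₁ ≫ p ≠ 0` and `Hom(obj₁⟦1⟧, X) = 0`. -/
lemma vanConeYo0 (T : Triangle S) (hT : T ∈ distTriang S) {X : S} (p : T.obj₂ ⟶ X)
    (hgen : ∀ v : T.obj₂ ⟶ X, ∃ c : K, v = c • p)
    (hp : T.mor₁ ≫ p ≠ 0)
    (hv1 : ∀ u : T.obj₁⟦(1:ℤ)⟧ ⟶ X, u = 0) :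
    ∀ u : T.obj₃ ⟶ X, u = 0 := by
  intro u
  obtain ⟨c, hc⟩ := hgen (T.mor₂ ≫ u)
  have h0 : c • (T.mor₁ ≫ p) = 0 := by
    rw [← Linear.comp_smul, ← hc, ← Category.assoc, comp_distTriang_mor_zero₁₂ _ hT, zero_comp]
  have hc0 : c = 0 := smul_cancel h0 hp
  have h1 : T.mor₂ ≫ u = 0 := by rw [hc, hc0, zero_smul]
  obtain ⟨w, hw⟩ := Triangle.yoneda_exact₃ _ hT u h1
  rw [hw, hv1 w, comp_zero]

/-- vanishing of `Hom(obj₃, Y⟦1⟧)` when `Hom(obj₁, Y)` is spanned by `p` with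
`mor₃ ≫ p⟦1⟧ = 0` and `Hom(obj₂, Y⟦1⟧) = 0`. -/
lemma vanConeYo1 (T : Triangle S) (hT : T ∈ distTriang S) {Y : S} (p : T.obj₁ ⟶ Y)
    (hgen : ∀ v : T.obj₁ ⟶ Y, ∃ c : K, v = c • p)
    (hfac : T.mor₃ ≫ p⟦(1:ℤ)⟧' = 0)
    (hv2 : ∀ u : T.obj₂ ⟶ Y⟦(1:ℤ)⟧, u = 0) :
    ∀ u : T.obj₃ ⟶ Y⟦(1:ℤ)⟧, u = 0 := by
  intro u
  obtain ⟨w, hw⟩ := Triangle.yoneda_exact₃ _ hT u (hv2 _)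
  obtain ⟨v, hv⟩ := (shiftFunctor S (1:ℤ)).map_surjective w
  obtain ⟨c, hc⟩ := hgen v
  have hv' : v = p ≫ (c • 𝟙 Y) := by rw [Linear.comp_smul, Category.comp_id]; exact hc
  rw [hw, ← hv, hv', CategoryTheory.Functor.map_comp, ← Category.assoc, hfac, zero_comp]

/-- vanishing of `Hom(obj₂, X)` from vanishing at `obj₁` and `obj₃`. -/
lemma vanConeYo₂ (T : Triangle S) (hT : T ∈ distTriang S) {X : S}
    (h1 : ∀ u : T.obj₁ ⟶ X, u = 0) (h3 : ∀ u : T.obj₃ ⟶ X, u = 0) :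
    ∀ u : T.obj₂ ⟶ X, u = 0 := by
  intro u
  obtain ⟨w, hw⟩ := Triangle.yoneda_exact₂ _ hT u (h1 _)
  rw [hw, h3 w, comp_zero]

/-- `Hom(W, obj₃)` is spanned by `p ≫ mor₂` when `Hom(W, obj₂)` is spanned by `p`
and `Hom(W, obj₁⟦1⟧) = 0`. -/
lemma spanCo (T : Triangle S) (hT : T ∈ distTriang S) {W : S} (p : W ⟶ T.obj₂)
    (hgen : ∀ v : W ⟶ T.obj₂, ∃ c : K, v = c • p)
    (hv3 : ∀ v : W ⟶ T.obj₁⟦(1:ℤ)⟧, v = 0) :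
    ∀ u : W ⟶ T.obj₃, ∃ c : K, u = c • (p ≫ T.mor₂) := by
  intro u
  obtain ⟨v, hv⟩ := Triangle.coyoneda_exact₃ _ hT u (hv3 _)
  obtain ⟨c, hc⟩ := hgen v
  exact ⟨c, by rw [hv, hc, Linear.smul_comp]⟩

/-- `Hom(obj₃, X)` is spanned by `q` when `Hom(obj₂, X)` is spanned by `mor₂ ≫ q`
and `Hom(obj₁⟦1⟧, X) = 0`. -/
lemma spanYoDiff (T : Triangle S) (hT : T ∈ distTriang S) {X : S} (q : T.obj₃ ⟶ X)
    (hgen : ∀ v : T.obj₂ ⟶ X, ∃ c : K, v = c • (T.mor₂ ≫ q))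
    (hv1 : ∀ u : T.obj₁⟦(1:ℤ)⟧ ⟶ X, u = 0) :
    ∀ u : T.obj₃ ⟶ X, ∃ c : K, u = c • q := by
  intro u
  obtain ⟨c, hc⟩ := hgen (T.mor₂ ≫ u)
  have h0 : T.mor₂ ≫ (u - c • q) = 0 := by
    rw [Preadditive.comp_sub, hc, Linear.comp_smul, sub_self]
  obtain ⟨w, hw⟩ := Triangle.yoneda_exact₃ _ hT _ h0
  rw [hv1 w, comp_zero] at hw
  exact ⟨c, by rw [← sub_eq_zero]; exact hw⟩

/-- the six End conditions at level `n`. -/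
def Ends (K : Type*) [Field K] {S : Type*} [Category S] [Preadditive S] [Linear K S]
    [HasShift S ℤ] (A B C D E F : S) (n : ℤ) : Prop :=
  (∀ u : A⟦n⟧ ⟶ A⟦n⟧, ∃ c : K, u = c • 𝟙 (A⟦n⟧)) ∧
  (∀ u : B⟦n⟧ ⟶ B⟦n⟧, ∃ c : K, u = c • 𝟙 (B⟦n⟧)) ∧
  (∀ u : C⟦n⟧ ⟶ C⟦n⟧, ∃ c : K, u = c • 𝟙 (C⟦n⟧)) ∧
  (∀ u : D⟦n⟧ ⟶ D⟦n⟧, ∃ c : K, u = c • 𝟙 (D⟦n⟧)) ∧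
  (∀ u : E⟦n⟧ ⟶ E⟦n⟧, ∃ c : K, u = c • 𝟙 (E⟦n⟧)) ∧
  (∀ u : F⟦n⟧ ⟶ F⟦n⟧, ∃ c : K, u = c • 𝟙 (F⟦n⟧))

end HomAux

open HomAux

/-- Hom computations in `S`: for distinct `X, Y` among the six
indecomposables `A, B, C, D, E, F` (indexed `0, ..., 5`) and `n : ℤ`, the space
`Hom(X, Y⟦n⟧)` vanishes except in the fourteen listed cases, where it is
one-dimensional, generated by the corresponding structure morphism of the octahedron;
moreover every indecomposable `X⟦n⟧` is exceptional. -/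
theorem hom_spaces_computation
    {K : Type*} [Field K] {S : Type*} [Category S] [Preadditive S] [HasZeroObject S]
    [HasShift S ℤ] [∀ n : ℤ, (shiftFunctor S n).Additive] [Pretriangulated S]
    [Linear K S] [HasBinaryBiproducts S]
    {A B C D E F : S}
    (f : A ⟶ B) (g : B ⟶ C) (h : A ⟶ C) (hcomp : f ≫ g = h)
    -- `(A, B, C)` is a strong exceptional sequence with one-dimensional Hom spaces
    -- and nonzero composition
    (hA : ¬ Limits.IsZero A) (hB : ¬ Limits.IsZero B) (hC : ¬ Limits.IsZero C)
    (hEndA : ∀ u : A ⟶ A, ∃ c : K, u = c • 𝟙 A)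
    (hEndB : ∀ u : B ⟶ B, ∃ c : K, u = c • 𝟙 B)
    (hEndC : ∀ u : C ⟶ C, ∃ c : K, u = c • 𝟙 C)
    (hf : f ≠ 0) (hfgen : ∀ u : A ⟶ B, ∃ c : K, u = c • f)
    (hg : g ≠ 0) (hggen : ∀ u : B ⟶ C, ∃ c : K, u = c • g)
    (hh : h ≠ 0) (hhgen : ∀ u : A ⟶ C, ∃ c : K, u = c • h)
    (hvanAA : ∀ n : ℤ, n ≠ 0 → ∀ u : A ⟶ A⟦n⟧, u = 0)
    (hvanAB : ∀ n : ℤ, n ≠ 0 → ∀ u : A ⟶ B⟦n⟧, u = 0)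
    (hvanAC : ∀ n : ℤ, n ≠ 0 → ∀ u : A ⟶ C⟦n⟧, u = 0)
    (hvanBB : ∀ n : ℤ, n ≠ 0 → ∀ u : B ⟶ B⟦n⟧, u = 0)
    (hvanBC : ∀ n : ℤ, n ≠ 0 → ∀ u : B ⟶ C⟦n⟧, u = 0)
    (hvanCC : ∀ n : ℤ, n ≠ 0 → ∀ u : C ⟶ C⟦n⟧, u = 0)
    (hvanBA : ∀ (n : ℤ) (u : B ⟶ A⟦n⟧), u = 0)
    (hvanCA : ∀ (n : ℤ) (u : C ⟶ A⟦n⟧), u = 0)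
    (hvanCB : ∀ (n : ℤ) (u : C ⟶ B⟦n⟧), u = 0)
    -- fullness: `S` is the triangulated envelope of `{A, B, C}`
    (hgen : ∀ P : S → Prop,
      (∀ X Y : S, (X ≅ Y) → P X → P Y) → P A → P B → P C →
      (∀ (X : S) (m : ℤ), P X → P (X⟦m⟧)) →
      (∀ T ∈ distTriang S, P T.obj₁ → P T.obj₂ → P T.obj₃) →
      ∀ X : S, P X)
    -- the octahedron on `(f, g)`, with the standard notation of the paper
    (f' : B ⟶ D) (f'' : D ⟶ A⟦(1 : ℤ)⟧) (h' : C ⟶ E) (h'' : E ⟶ A⟦(1 : ℤ)⟧)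
    (g' : C ⟶ F) (g'' : F ⟶ B⟦(1 : ℤ)⟧) (k : D ⟶ E) (k' : E ⟶ F)
    (l : B ⟶ E) (l' : E ⟶ B⟦(1 : ℤ)⟧)
    (hT1 : Triangle.mk f f' f'' ∈ distTriang S)
    (hT2 : Triangle.mk h h' h'' ∈ distTriang S)
    (hT3 : Triangle.mk g g' g'' ∈ distTriang S)
    (hT4 : Triangle.mk k k' (g'' ≫ f'⟦(1 : ℤ)⟧') ∈ distTriang S)
    (hl₁ : l = g ≫ h') (hl₂ : l = f' ≫ k)
    (hl'₁ : l' = h'' ≫ f⟦(1 : ℤ)⟧') (hl'₂ : l' = k' ≫ g'')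
    (hk₁ : k ≫ h'' = f'') (hk₂ : h' ≫ k' = g') :
    -- vanishing outside the fourteen listed cases
    (∀ (i j : Fin 6) (n : ℤ), i ≠ j →
      (i, j, n) ∉ ([((0 : Fin 6), (1 : Fin 6), (0 : ℤ)), (0, 2, 0), (1, 2, 0), (1, 3, 0),
        (1, 4, 0), (2, 4, 0), (2, 5, 0), (3, 4, 0), (3, 0, 1), (4, 5, 0), (4, 0, 1),
        (4, 1, 1), (5, 1, 1), (5, 3, 1)] : List (Fin 6 × Fin 6 × ℤ)) →
      ∀ u : (![A, B, C, D, E, F] : Fin 6 → S) i ⟶ ((![A, B, C, D, E, F] : Fin 6 → S) j)⟦n⟧,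
        u = 0) ∧
    -- the fourteen one-dimensional Hom spaces, with their generators
    (f ≠ 0 ∧ ∀ u : A ⟶ B, ∃ c : K, u = c • f) ∧
    (h ≠ 0 ∧ ∀ u : A ⟶ C, ∃ c : K, u = c • h) ∧
    (g ≠ 0 ∧ ∀ u : B ⟶ C, ∃ c : K, u = c • g) ∧
    (f' ≠ 0 ∧ ∀ u : B ⟶ D, ∃ c : K, u = c • f') ∧
    (l ≠ 0 ∧ ∀ u : B ⟶ E, ∃ c : K, u = c • l) ∧
    (h' ≠ 0 ∧ ∀ u : C ⟶ E, ∃ c : K, u = c • h') ∧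
    (g' ≠ 0 ∧ ∀ u : C ⟶ F, ∃ c : K, u = c • g') ∧
    (k ≠ 0 ∧ ∀ u : D ⟶ E, ∃ c : K, u = c • k) ∧
    (f'' ≠ 0 ∧ ∀ u : D ⟶ A⟦(1 : ℤ)⟧, ∃ c : K, u = c • f'') ∧
    (k' ≠ 0 ∧ ∀ u : E ⟶ F, ∃ c : K, u = c • k') ∧
    (h'' ≠ 0 ∧ ∀ u : E ⟶ A⟦(1 : ℤ)⟧, ∃ c : K, u = c • h'') ∧
    (l' ≠ 0 ∧ ∀ u : E ⟶ B⟦(1 : ℤ)⟧, ∃ c : K, u = c • l') ∧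
    (g'' ≠ 0 ∧ ∀ u : F ⟶ B⟦(1 : ℤ)⟧, ∃ c : K, u = c • g'') ∧
    (g'' ≫ f'⟦(1 : ℤ)⟧' ≠ 0 ∧
      ∀ u : F ⟶ D⟦(1 : ℤ)⟧, ∃ c : K, u = c • (g'' ≫ f'⟦(1 : ℤ)⟧')) ∧
    -- every indecomposable `X⟦n⟧` is exceptional
    (∀ (i : Fin 6) (n : ℤ),
      ¬ Limits.IsZero (((![A, B, C, D, E, F] : Fin 6 → S) i)⟦n⟧) ∧
      (∀ u : ((![A, B, C, D, E, F] : Fin 6 → S) i)⟦n⟧ ⟶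
          ((![A, B, C, D, E, F] : Fin 6 → S) i)⟦n⟧, ∃ c : K, u = c • 𝟙 _) ∧
      ∀ m : ℤ, m ≠ 0 →
        ∀ u : ((![A, B, C, D, E, F] : Fin 6 → S) i)⟦n⟧ ⟶
          (((![A, B, C, D, E, F] : Fin 6 → S) i)⟦n⟧)⟦m⟧, u = 0) := by

  classical
  -- zero composites from the four distinguished triangles
  have z12_1 : f ≫ f' = 0 := comp_distTriang_mor_zero₁₂ _ hT1
  have z12_2 : h ≫ h' = 0 := comp_distTriang_mor_zero₁₂ _ hT2
  have z12_3 : g ≫ g' = 0 := comp_distTriang_mor_zero₁₂ _ hT3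
  have z23_1 : f' ≫ f'' = 0 := comp_distTriang_mor_zero₂₃ _ hT1
  have z23_2 : h' ≫ h'' = 0 := comp_distTriang_mor_zero₂₃ _ hT2
  have z23_3 : g' ≫ g'' = 0 := comp_distTriang_mor_zero₂₃ _ hT3
  have z31_1 : f'' ≫ f⟦(1:ℤ)⟧' = 0 := comp_distTriang_mor_zero₃₁ _ hT1
  have z31_2 : h'' ≫ h⟦(1:ℤ)⟧' = 0 := comp_distTriang_mor_zero₃₁ _ hT2
  have z31_3 : g'' ≫ g⟦(1:ℤ)⟧' = 0 := comp_distTriang_mor_zero₃₁ _ hT3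
  have z31_4 : (g'' ≫ f'⟦(1:ℤ)⟧') ≫ k⟦(1:ℤ)⟧' = 0 := comp_distTriang_mor_zero₃₁ _ hT4
  -- plain versions of the vanishing hypotheses
  have pBA : ∀ u : B ⟶ A, u = 0 := vanPlain (hvanBA 0)
  have pCA : ∀ u : C ⟶ A, u = 0 := vanPlain (hvanCA 0)
  have pCB : ∀ u : C ⟶ B, u = 0 := vanPlain (hvanCB 0)
  -- nonvanishing of the structure morphisms
  have nzf' : f' ≠ 0 := by
    intro h0
    obtain ⟨v, hv⟩ := Triangle.coyoneda_exact₂ _ hT1 (𝟙 B)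
      (by show 𝟙 B ≫ f' = 0; rw [h0, comp_zero])
    erw [pBA v, zero_comp] at hv
    exact hB ((IsZero.iff_id_eq_zero B).2 hv)
  have nzh' : h' ≠ 0 := by
    intro h0
    obtain ⟨v, hv⟩ := Triangle.coyoneda_exact₂ _ hT2 (𝟙 C)
      (by show 𝟙 C ≫ h' = 0; rw [h0, comp_zero])
    erw [pCA v, zero_comp] at hv
    exact hC ((IsZero.iff_id_eq_zero C).2 hv)
  have nzg' : g' ≠ 0 := by
    intro h0
    obtain ⟨v, hv⟩ := Triangle.coyoneda_exact₂ _ hT3 (𝟙 C)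
      (by show 𝟙 C ≫ g' = 0; rw [h0, comp_zero])
    erw [pCB v, zero_comp] at hv
    exact hC ((IsZero.iff_id_eq_zero C).2 hv)
  have nzl : l ≠ 0 := by
    intro h0
    rw [hl₁] at h0
    obtain ⟨v, hv⟩ := Triangle.coyoneda_exact₂ _ hT2 g h0
    erw [pBA v, zero_comp] at hv
    exact hg hv
  have nzk : k ≠ 0 := fun h0 => nzl (by rw [hl₂, h0, comp_zero])
  have nzk' : k' ≠ 0 := fun h0 => nzg' (by rw [← hk₂, h0, comp_zero])
  have nzf'' : f'' ≠ 0 := mor₃_ne_zero _ hT1 pBA hA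
  have nzh'' : h'' ≠ 0 := mor₃_ne_zero _ hT2 pCA hA
  have nzg'' : g'' ≠ 0 := mor₃_ne_zero _ hT3 pCB hB
  have nzD : ¬ IsZero D := fun hz => nzf' (hz.eq_of_tgt f' 0)
  have nzE : ¬ IsZero E := fun hz => nzh' (hz.eq_of_tgt h' 0)
  have nzF : ¬ IsZero F := fun hz => nzg' (hz.eq_of_tgt g' 0)
  have nzl' : l' ≠ 0 := by
    intro h0
    rw [hl'₁] at h0
    obtain ⟨w, hw⟩ := Triangle.yoneda_exact₃ _ (rot_of_distTriang _ hT2)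
      (f⟦(1:ℤ)⟧' : (Triangle.mk h h' h'').rotate.obj₃ ⟶ B⟦(1:ℤ)⟧) h0
    obtain ⟨v, hv⟩ := (shiftFunctor S (1:ℤ)).map_surjective
      (w : C⟦(1:ℤ)⟧ ⟶ B⟦(1:ℤ)⟧)
    erw [pCB v, CategoryTheory.Functor.map_zero] at hv
    rw [← hv, comp_zero] at hw
    exact hf ((shiftFunctor S (1:ℤ)).map_injective
      (by erw [hw, CategoryTheory.Functor.map_zero]; rfl))
  -- ### the weight-0 vanishing table
  -- target D
  have v_AD : ∀ n : ℤ, ∀ u : A ⟶ D⟦n⟧, u = 0 := by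
    intro n
    by_cases h0 : n = 0
    · subst h0
      exact vanPlain' (vanCone0 _ hT1 f hfgen z12_1 (hvanAA 1 one_ne_zero))
    by_cases h1 : n = -1
    · subst h1
      refine vanDown (vanShiftOneCone _ hT1 (𝟙 A) hEndA
        (by erw [Category.id_comp]; exact hf) ?_)
      exact vanT (hvanAB (-1) (by norm_num)) 1 0 (Iso.refl _) (sZero B).symm (by norm_num)
    · exact vanConeCo _ hT1 A n (hvanAB n h0) (hvanAA (n+1) (by omega))
  have v_BD : ∀ n : ℤ, n ≠ 0 → ∀ u : B ⟶ D⟦n⟧, u = 0 := fun n hn =>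
    vanConeCo _ hT1 B n (hvanBB n hn) (hvanBA (n+1))
  have v_CD : ∀ n : ℤ, ∀ u : C ⟶ D⟦n⟧, u = 0 := fun n =>
    vanConeCo _ hT1 C n (hvanCB n) (hvanCA (n+1))
  -- target E
  have v_AE : ∀ n : ℤ, ∀ u : A ⟶ E⟦n⟧, u = 0 := by
    intro n
    by_cases h0 : n = 0
    · subst h0
      exact vanPlain' (vanCone0 _ hT2 h hhgen z12_2 (hvanAA 1 one_ne_zero))
    by_cases h1 : n = -1
    · subst h1
      refine vanDown (vanShiftOneCone _ hT2 (𝟙 A) hEndA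
        (by erw [Category.id_comp]; exact hh) ?_)
      exact vanT (hvanAC (-1) (by norm_num)) 1 0 (Iso.refl _) (sZero C).symm (by norm_num)
    · exact vanConeCo _ hT2 A n (hvanAC n h0) (hvanAA (n+1) (by omega))
  have v_BE : ∀ n : ℤ, n ≠ 0 → ∀ u : B ⟶ E⟦n⟧, u = 0 := fun n hn =>
    vanConeCo _ hT2 B n (hvanBC n hn) (hvanBA (n+1))
  have v_CE : ∀ n : ℤ, n ≠ 0 → ∀ u : C ⟶ E⟦n⟧, u = 0 := fun n hn =>
    vanConeCo _ hT2 C n (hvanCC n hn) (hvanCA (n+1))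
  -- target F
  have v_AF : ∀ n : ℤ, ∀ u : A ⟶ F⟦n⟧, u = 0 := by
    intro n
    by_cases h0 : n = 0
    · subst h0
      refine vanPlain' (vanCone0 _ hT3 h hhgen ?_ (hvanAB 1 one_ne_zero))
      show h ≫ g' = 0
      rw [← hcomp, Category.assoc, z12_3, comp_zero]
    by_cases h1 : n = -1
    · subst h1
      refine vanDown (vanShiftOneCone _ hT3 f hfgen
        (by show f ≫ g ≠ 0; rw [hcomp]; exact hh) ?_)
      exact vanT (hvanAC (-1) (by norm_num)) 1 0 (Iso.refl _) (sZero C).symm (by norm_num)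
    · exact vanConeCo _ hT3 A n (hvanAC n h0) (hvanAB (n+1) (by omega))
  have v_BF : ∀ n : ℤ, ∀ u : B ⟶ F⟦n⟧, u = 0 := by
    intro n
    by_cases h0 : n = 0
    · subst h0
      exact vanPlain' (vanCone0 _ hT3 g hggen z12_3 (hvanBB 1 one_ne_zero))
    by_cases h1 : n = -1
    · subst h1
      refine vanDown (vanShiftOneCone _ hT3 (𝟙 B) hEndB
        (by erw [Category.id_comp]; exact hg) ?_)
      exact vanT (hvanBC (-1) (by norm_num)) 1 0 (Iso.refl _) (sZero C).symm (by norm_num)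
    · exact vanConeCo _ hT3 B n (hvanBC n h0) (hvanBB (n+1) (by omega))
  have v_CF : ∀ n : ℤ, n ≠ 0 → ∀ u : C ⟶ F⟦n⟧, u = 0 := fun n hn =>
    vanConeCo _ hT3 C n (hvanCC n hn) (hvanCB (n+1))
  -- source D
  have v_DA : ∀ n : ℤ, n ≠ 1 → ∀ u : D ⟶ A⟦n⟧, u = 0 := fun n hn =>
    vanConeYo _ hT1 (A⟦n⟧) (hvanBA n)
      (vanT (hvanAA (n-1) (by omega)) 1 n (Iso.refl _) (Iso.refl _) (by ring))
  have v_DB : ∀ n : ℤ, ∀ u : D ⟶ B⟦n⟧, u = 0 := by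
    intro n
    by_cases h0 : n = 0
    · subst h0
      refine vanPlain' (vanConeYo0 _ hT1 (𝟙 B) hEndB
        (by show f ≫ 𝟙 B ≠ 0; rw [Category.comp_id]; exact hf) ?_)
      exact vanT (hvanAB (-1) (by norm_num)) 1 0 (Iso.refl _) (sZero B).symm (by norm_num)
    by_cases h1 : n = 1
    · subst h1
      exact vanConeYo1 _ hT1 f hfgen z31_1 (hvanBB 1 one_ne_zero)
    · exact vanConeYo _ hT1 (B⟦n⟧) (hvanBB n h0)
        (vanT (hvanAB (n-1) (by omega)) 1 n (Iso.refl _) (Iso.refl _) (by ring))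
  have v_DC : ∀ n : ℤ, ∀ u : D ⟶ C⟦n⟧, u = 0 := by
    intro n
    by_cases h0 : n = 0
    · subst h0
      refine vanPlain' (vanConeYo0 _ hT1 g hggen
        (by show f ≫ g ≠ 0; rw [hcomp]; exact hh) ?_)
      exact vanT (hvanAC (-1) (by norm_num)) 1 0 (Iso.refl _) (sZero C).symm (by norm_num)
    by_cases h1 : n = 1
    · subst h1
      refine vanConeYo1 _ hT1 h hhgen ?_ (hvanBC 1 one_ne_zero)
      show f'' ≫ h⟦(1:ℤ)⟧' = 0
      rw [← hcomp, CategoryTheory.Functor.map_comp, ← Category.assoc, z31_1, zero_comp]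
    · exact vanConeYo _ hT1 (C⟦n⟧) (hvanBC n h0)
        (vanT (hvanAC (n-1) (by omega)) 1 n (Iso.refl _) (Iso.refl _) (by ring))
  -- spans into D, E, F from B, C
  have s_BD : ∀ u : B ⟶ D, ∃ c : K, u = c • f' := by
    intro u
    obtain ⟨c, hc⟩ := spanCo _ hT1 (𝟙 B) hEndB (hvanBA 1) u
    exact ⟨c, by erw [hc, Category.id_comp]; rfl⟩
  have s_BE : ∀ u : B ⟶ E, ∃ c : K, u = c • l := by
    intro u
    obtain ⟨c, hc⟩ := spanCo _ hT2 g hggen (hvanBA 1) u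
    exact ⟨c, by rw [hc, hl₁]; rfl⟩
  have s_CE : ∀ u : C ⟶ E, ∃ c : K, u = c • h' := by
    intro u
    obtain ⟨c, hc⟩ := spanCo _ hT2 (𝟙 C) hEndC (hvanCA 1) u
    exact ⟨c, by erw [hc, Category.id_comp]; rfl⟩
  have s_CF : ∀ u : C ⟶ F, ∃ c : K, u = c • g' := by
    intro u
    obtain ⟨c, hc⟩ := spanCo _ hT3 (𝟙 C) hEndC (hvanCB 1) u
    exact ⟨c, by erw [hc, Category.id_comp]; rfl⟩
  -- endomorphism rings of D, E, F
  have hA1D : ∀ u : A⟦(1:ℤ)⟧ ⟶ D, u = 0 :=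
    vanT (v_AD (-1)) 1 0 (Iso.refl _) (sZero D).symm (by norm_num)
  have hA1E : ∀ u : A⟦(1:ℤ)⟧ ⟶ E, u = 0 :=
    vanT (v_AE (-1)) 1 0 (Iso.refl _) (sZero E).symm (by norm_num)
  have hA1F : ∀ u : A⟦(1:ℤ)⟧ ⟶ F, u = 0 :=
    vanT (v_AF (-1)) 1 0 (Iso.refl _) (sZero F).symm (by norm_num)
  have hB1F : ∀ u : B⟦(1:ℤ)⟧ ⟶ F, u = 0 :=
    vanT (v_BF (-1)) 1 0 (Iso.refl _) (sZero F).symm (by norm_num)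
  have e_D : ∀ u : D ⟶ D, ∃ c : K, u = c • 𝟙 D := by
    refine spanYoDiff _ hT1 (𝟙 D) ?_ hA1D
    intro v
    obtain ⟨c, hc⟩ := s_BD v
    refine ⟨c, ?_⟩
    rw [hc]
    show c • f' = c • (f' ≫ 𝟙 D)
    rw [Category.comp_id]
  have e_E : ∀ u : E ⟶ E, ∃ c : K, u = c • 𝟙 E := by
    refine spanYoDiff _ hT2 (𝟙 E) ?_ hA1E
    intro v
    obtain ⟨c, hc⟩ := s_CE v
    refine ⟨c, ?_⟩
    rw [hc]
    show c • h' = c • (h' ≫ 𝟙 E)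
    rw [Category.comp_id]
  have e_F : ∀ u : F ⟶ F, ∃ c : K, u = c • 𝟙 F := by
    refine spanYoDiff _ hT3 (𝟙 F) ?_ hB1F
    intro v
    obtain ⟨c, hc⟩ := s_CF v
    refine ⟨c, ?_⟩
    rw [hc]
    show c • g' = c • (g' ≫ 𝟙 F)
    rw [Category.comp_id]
  -- spans D ⟶ E and E ⟶ F
  have s_DE : ∀ u : D ⟶ E, ∃ c : K, u = c • k := by
    refine spanYoDiff _ hT1 k ?_ hA1E
    intro v
    obtain ⟨c, hc⟩ := s_BE v
    exact ⟨c, by rw [hc, hl₂]; rfl⟩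
  have s_EF : ∀ u : E ⟶ F, ∃ c : K, u = c • k' := by
    refine spanYoDiff _ hT2 k' ?_ hA1F
    intro v
    obtain ⟨c, hc⟩ := s_CF v
    exact ⟨c, by rw [hc, ← hk₂]; rfl⟩
  -- source F towards A, B, C
  have v_FA : ∀ n : ℤ, ∀ u : F ⟶ A⟦n⟧, u = 0 := fun n =>
    vanConeYo _ hT3 (A⟦n⟧) (hvanCA n)
      (vanT (hvanBA (n-1)) 1 n (Iso.refl _) (Iso.refl _) (by ring))
  have v_FB : ∀ n : ℤ, n ≠ 1 → ∀ u : F ⟶ B⟦n⟧, u = 0 := fun n hn =>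
    vanConeYo _ hT3 (B⟦n⟧) (hvanCB n)
      (vanT (hvanBB (n-1) (by omega)) 1 n (Iso.refl _) (Iso.refl _) (by ring))
  have v_FC : ∀ n : ℤ, ∀ u : F ⟶ C⟦n⟧, u = 0 := by
    intro n
    by_cases h0 : n = 0
    · subst h0
      refine vanPlain' (vanConeYo0 _ hT3 (𝟙 C) hEndC
        (by show g ≫ 𝟙 C ≠ 0; rw [Category.comp_id]; exact hg) ?_)
      exact vanT (hvanBC (-1) (by norm_num)) 1 0 (Iso.refl _) (sZero C).symm (by norm_num)
    by_cases h1 : n = 1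
    · subst h1
      exact vanConeYo1 _ hT3 g hggen z31_3 (hvanCC 1 one_ne_zero)
    · exact vanConeYo _ hT3 (C⟦n⟧) (hvanCC n h0)
        (vanT (hvanBC (n-1) (by omega)) 1 n (Iso.refl _) (Iso.refl _) (by ring))
  -- source E towards A, B, C, D
  have v_EA : ∀ n : ℤ, n ≠ 1 → ∀ u : E ⟶ A⟦n⟧, u = 0 := fun n hn =>
    vanConeYo _ hT2 (A⟦n⟧) (hvanCA n)
      (vanT (hvanAA (n-1) (by omega)) 1 n (Iso.refl _) (Iso.refl _) (by ring))
  have v_EB : ∀ n : ℤ, n ≠ 1 → ∀ u : E ⟶ B⟦n⟧, u = 0 := fun n hn =>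
    vanConeYo _ hT2 (B⟦n⟧) (hvanCB n)
      (vanT (hvanAB (n-1) (by omega)) 1 n (Iso.refl _) (Iso.refl _) (by ring))
  have v_EC : ∀ n : ℤ, ∀ u : E ⟶ C⟦n⟧, u = 0 := by
    intro n
    by_cases h0 : n = 0
    · subst h0
      refine vanPlain' (vanConeYo0 _ hT2 (𝟙 C) hEndC
        (by show h ≫ 𝟙 C ≠ 0; rw [Category.comp_id]; exact hh) ?_)
      exact vanT (hvanAC (-1) (by norm_num)) 1 0 (Iso.refl _) (sZero C).symm (by norm_num)
    by_cases h1 : n = 1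
    · subst h1
      exact vanConeYo₂ _ hT4 (v_DC 1) (v_FC 1)
    · exact vanConeYo _ hT2 (C⟦n⟧) (hvanCC n h0)
        (vanT (hvanAC (n-1) (by omega)) 1 n (Iso.refl _) (Iso.refl _) (by ring))
  have v_ED : ∀ n : ℤ, ∀ u : E ⟶ D⟦n⟧, u = 0 := fun n =>
    vanConeYo _ hT2 (D⟦n⟧) (v_CD n)
      (vanT (v_AD (n-1)) 1 n (Iso.refl _) (Iso.refl _) (by ring))
  have v_EE : ∀ n : ℤ, n ≠ 0 → ∀ u : E ⟶ E⟦n⟧, u = 0 := fun n hn =>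
    vanConeYo _ hT2 (E⟦n⟧) (v_CE n hn)
      (vanT (v_AE (n-1)) 1 n (Iso.refl _) (Iso.refl _) (by ring))
  have v_EF : ∀ n : ℤ, n ≠ 0 → ∀ u : E ⟶ F⟦n⟧, u = 0 := fun n hn =>
    vanConeYo _ hT2 (F⟦n⟧) (v_CF n hn)
      (vanT (v_AF (n-1)) 1 n (Iso.refl _) (Iso.refl _) (by ring))
  -- remaining source-D lines
  have v_DD : ∀ n : ℤ, n ≠ 0 → ∀ u : D ⟶ D⟦n⟧, u = 0 := fun n hn =>
    vanConeYo _ hT1 (D⟦n⟧) (v_BD n hn)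
      (vanT (v_AD (n-1)) 1 n (Iso.refl _) (Iso.refl _) (by ring))
  have v_DE : ∀ n : ℤ, n ≠ 0 → ∀ u : D ⟶ E⟦n⟧, u = 0 := fun n hn =>
    vanConeYo _ hT1 (E⟦n⟧) (v_BE n hn)
      (vanT (v_AE (n-1)) 1 n (Iso.refl _) (Iso.refl _) (by ring))
  have v_DF : ∀ n : ℤ, ∀ u : D ⟶ F⟦n⟧, u = 0 := fun n =>
    vanConeYo _ hT1 (F⟦n⟧) (v_BF n)
      (vanT (v_AF (n-1)) 1 n (Iso.refl _) (Iso.refl _) (by ring))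
  -- source F towards D, E, F
  have v_FD : ∀ n : ℤ, n ≠ 1 → ∀ u : F ⟶ D⟦n⟧, u = 0 := fun n hn =>
    vanConeYo _ hT3 (D⟦n⟧) (v_CD n)
      (vanT (v_BD (n-1) (by omega)) 1 n (Iso.refl _) (Iso.refl _) (by ring))
  have v_FE : ∀ n : ℤ, ∀ u : F ⟶ E⟦n⟧, u = 0 := by
    intro n
    by_cases h0 : n = 0
    · subst h0
      refine vanPlain' (vanConeYo0 _ hT4 (𝟙 E) e_E
        (by show k ≫ 𝟙 E ≠ 0; rw [Category.comp_id]; exact nzk) ?_)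
      exact vanT (v_DE (-1) (by norm_num)) 1 0 (Iso.refl _) (sZero E).symm (by norm_num)
    by_cases h1 : n = 1
    · subst h1
      exact vanConeYo1 _ hT4 k s_DE z31_4 (v_EE 1 one_ne_zero)
    · exact vanConeYo _ hT3 (E⟦n⟧) (v_CE n h0)
        (vanT (v_BE (n-1) (by omega)) 1 n (Iso.refl _) (Iso.refl _) (by ring))
  have v_FF : ∀ n : ℤ, n ≠ 0 → ∀ u : F ⟶ F⟦n⟧, u = 0 := fun n hn =>
    vanConeYo _ hT3 (F⟦n⟧) (v_CF n hn)
      (vanT (v_BF (n-1)) 1 n (Iso.refl _) (Iso.refl _) (by ring))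
  -- the remaining nonvanishing
  have nzk'' : g'' ≫ f'⟦(1:ℤ)⟧' ≠ 0 :=
    mor₃_ne_zero _ hT4 (vanPlain (v_ED 0)) nzD
  -- the degree-one spans
  have s_DA1 : ∀ u : D ⟶ A⟦(1:ℤ)⟧, ∃ c : K, u = c • f'' := by
    intro u
    obtain ⟨c, hc⟩ := spanCo _ (rot_of_distTriang _ hT1) (𝟙 D) e_D (v_DB 1) u
    exact ⟨c, by erw [hc, Category.id_comp]; rfl⟩
  have s_EA1 : ∀ u : E ⟶ A⟦(1:ℤ)⟧, ∃ c : K, u = c • h'' := by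
    intro u
    obtain ⟨c, hc⟩ := spanCo _ (rot_of_distTriang _ hT2) (𝟙 E) e_E (v_EC 1) u
    exact ⟨c, by erw [hc, Category.id_comp]; rfl⟩
  have s_FB1 : ∀ u : F ⟶ B⟦(1:ℤ)⟧, ∃ c : K, u = c • g'' := by
    intro u
    obtain ⟨c, hc⟩ := spanCo _ (rot_of_distTriang _ hT3) (𝟙 F) e_F (v_FC 1) u
    exact ⟨c, by erw [hc, Category.id_comp]; rfl⟩
  have s_EB1 : ∀ u : E ⟶ B⟦(1:ℤ)⟧, ∃ c : K, u = c • l' := by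
    intro u
    obtain ⟨c, hc⟩ := spanCo _ (rot_of_distTriang _ hT3)
      (k' : E ⟶ (Triangle.mk g g' g'').rotate.obj₂) s_EF (v_EC 1) u
    exact ⟨c, by rw [hc, hl'₂]; rfl⟩
  have s_FD1 : ∀ u : F ⟶ D⟦(1:ℤ)⟧, ∃ c : K, u = c • (g'' ≫ f'⟦(1:ℤ)⟧') := by
    intro u
    obtain ⟨c, hc⟩ := spanCo _ (rot_of_distTriang _ hT4) (𝟙 F) e_F (v_FE 1) u
    exact ⟨c, by erw [hc, Category.id_comp]; rfl⟩
  -- ### endomorphism rings at all shifts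
  have endsBase : Ends K A B C D E F 0 :=
    ⟨endIso (sZero A).symm hEndA, endIso (sZero B).symm hEndB, endIso (sZero C).symm hEndC,
     endIso (sZero D).symm e_D, endIso (sZero E).symm e_E, endIso (sZero F).symm e_F⟩
  have endsUp : ∀ n : ℤ, Ends K A B C D E F n → Ends K A B C D E F (n+1) := by
    intro n hn
    obtain ⟨eA, eB, eC, eD, eE, eF⟩ := hn
    have hT1n := Triangle.shift_distinguished _ hT1 n
    have hT2n := Triangle.shift_distinguished _ hT2 n
    have hT3n := Triangle.shift_distinguished _ hT3 n
    have eA' : ∀ u : (A⟦n⟧)⟦(1:ℤ)⟧ ⟶ (A⟦n⟧)⟦(1:ℤ)⟧, ∃ c : K, u = c • 𝟙 ((A⟦n⟧)⟦(1:ℤ)⟧) := by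
      refine endLemma₃ _ (rot_of_distTriang _ hT1n) eD ?_ ?_
      · exact vanT (v_DB 1) n (n+1) (Iso.refl _) (sAdd B n 1) (by ring)
      · exact vanT (hvanBA 0) (n+1) (n+1) (sAdd B n 1) (sAdd A n 1) (by ring)
    have eB' : ∀ u : (B⟦n⟧)⟦(1:ℤ)⟧ ⟶ (B⟦n⟧)⟦(1:ℤ)⟧, ∃ c : K, u = c • 𝟙 ((B⟦n⟧)⟦(1:ℤ)⟧) := by
      refine endLemma₃ _ (rot_of_distTriang _ hT3n) eF ?_ ?_
      · exact vanT (v_FC 1) n (n+1) (Iso.refl _) (sAdd C n 1) (by ring)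
      · exact vanT (hvanCB 0) (n+1) (n+1) (sAdd C n 1) (sAdd B n 1) (by ring)
    have eC' : ∀ u : (C⟦n⟧)⟦(1:ℤ)⟧ ⟶ (C⟦n⟧)⟦(1:ℤ)⟧, ∃ c : K, u = c • 𝟙 ((C⟦n⟧)⟦(1:ℤ)⟧) := by
      refine endLemma₃ _ (rot_of_distTriang _ (rot_of_distTriang _ hT2n)) eA' ?_ ?_
      · exact vanT (v_AE 0) (n+1) (n+1) (sAdd A n 1) (sAdd E n 1) (by ring)
      · exact vanT (v_EC 0) (n+1) (n+1) (sAdd E n 1) (sAdd C n 1) (by ring)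
    have eA₁ := endIso (sAdd A n 1) eA'
    have eB₁ := endIso (sAdd B n 1) eB'
    have eC₁ := endIso (sAdd C n 1) eC'
    have hT1n1 := Triangle.shift_distinguished _ hT1 (n+1)
    have hT2n1 := Triangle.shift_distinguished _ hT2 (n+1)
    have hT3n1 := Triangle.shift_distinguished _ hT3 (n+1)
    have eD₁ : ∀ u : D⟦n+1⟧ ⟶ D⟦n+1⟧, ∃ c : K, u = c • 𝟙 (D⟦n+1⟧) := by
      refine endLemma₃ _ hT1n1 eB₁ ?_ ?_
      · exact vanT (hvanBA 1) (n+1) (n+1+1) (Iso.refl _) (sAdd A (n+1) 1) (by ring)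
      · exact vanT (v_AD (-1)) (n+1+1) (n+1) (sAdd A (n+1) 1) (Iso.refl _) (by ring)
    have eE₁ : ∀ u : E⟦n+1⟧ ⟶ E⟦n+1⟧, ∃ c : K, u = c • 𝟙 (E⟦n+1⟧) := by
      refine endLemma₃ _ hT2n1 eC₁ ?_ ?_
      · exact vanT (hvanCA 1) (n+1) (n+1+1) (Iso.refl _) (sAdd A (n+1) 1) (by ring)
      · exact vanT (v_AE (-1)) (n+1+1) (n+1) (sAdd A (n+1) 1) (Iso.refl _) (by ring)
    have eF₁ : ∀ u : F⟦n+1⟧ ⟶ F⟦n+1⟧, ∃ c : K, u = c • 𝟙 (F⟦n+1⟧) := by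
      refine endLemma₃ _ hT3n1 eC₁ ?_ ?_
      · exact vanT (hvanCB 1) (n+1) (n+1+1) (Iso.refl _) (sAdd B (n+1) 1) (by ring)
      · exact vanT (v_BF (-1)) (n+1+1) (n+1) (sAdd B (n+1) 1) (Iso.refl _) (by ring)
    exact ⟨eA₁, eB₁, eC₁, eD₁, eE₁, eF₁⟩
  have endsDown : ∀ m : ℤ, Ends K A B C D E F (m+1) → Ends K A B C D E F m := by
    intro m hm
    obtain ⟨eA1, eB1, eC1, eD1, eE1, eF1⟩ := hm
    have hT1m := Triangle.shift_distinguished _ hT1 m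
    have hT2m := Triangle.shift_distinguished _ hT2 m
    have hT3m := Triangle.shift_distinguished _ hT3 m
    have eAc := endIso (sAdd A m 1).symm eA1
    have eBc := endIso (sAdd B m 1).symm eB1
    have eD0 : ∀ u : D⟦m⟧ ⟶ D⟦m⟧, ∃ c : K, u = c • 𝟙 (D⟦m⟧) := by
      refine endLemma₃' _ hT1m eAc ?_ ?_
      · exact vanT (hvanBA 1) m (m+1) (Iso.refl _) (sAdd A m 1) (by ring)
      · exact vanT (v_DB 0) m m (Iso.refl _) (Iso.refl _) (by ring)
    have eE0 : ∀ u : E⟦m⟧ ⟶ E⟦m⟧, ∃ c : K, u = c • 𝟙 (E⟦m⟧) := by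
      refine endLemma₃' _ hT2m eAc ?_ ?_
      · exact vanT (hvanCA 1) m (m+1) (Iso.refl _) (sAdd A m 1) (by ring)
      · exact vanT (v_EC 0) m m (Iso.refl _) (Iso.refl _) (by ring)
    have eF0 : ∀ u : F⟦m⟧ ⟶ F⟦m⟧, ∃ c : K, u = c • 𝟙 (F⟦m⟧) := by
      refine endLemma₃' _ hT3m eBc ?_ ?_
      · exact vanT (hvanCB 1) m (m+1) (Iso.refl _) (sAdd B m 1) (by ring)
      · exact vanT (v_FC 0) m m (Iso.refl _) (Iso.refl _) (by ring)
    have eB0 : ∀ u : B⟦m⟧ ⟶ B⟦m⟧, ∃ c : K, u = c • 𝟙 (B⟦m⟧) := by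
      refine endLemma₂ _ hT1m eD0 ?_ ?_
      · exact vanT (v_AD 0) m m (Iso.refl _) (Iso.refl _) (by ring)
      · exact vanT (hvanBA 0) m m (Iso.refl _) (Iso.refl _) (by ring)
    have eC0 : ∀ u : C⟦m⟧ ⟶ C⟦m⟧, ∃ c : K, u = c • 𝟙 (C⟦m⟧) := by
      refine endLemma₂ _ hT2m eE0 ?_ ?_
      · exact vanT (v_AE 0) m m (Iso.refl _) (Iso.refl _) (by ring)
      · exact vanT (hvanCA 0) m m (Iso.refl _) (Iso.refl _) (by ring)
    have eA0 : ∀ u : A⟦m⟧ ⟶ A⟦m⟧, ∃ c : K, u = c • 𝟙 (A⟦m⟧) := by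
      refine endLemma₁ _ hT1m eB0 ?_ ?_
      · exact vanT (v_DB 1) (m + -1) m (sAdd D m (-1)) (Iso.refl _) (by ring)
      · exact vanT (v_AD (-1)) m (m + -1) (Iso.refl _) (sAdd D m (-1)) (by ring)
    exact ⟨eA0, eB0, eC0, eD0, eE0, eF0⟩
  have ends : ∀ n : ℤ, Ends K A B C D E F n := by
    intro n
    induction n using Int.induction_on with
    | zero => exact endsBase
    | succ i ih => exact endsUp i ih
    | pred i ih =>
        refine endsDown (-(i:ℤ) - 1) ?_
        have harith : (-(i:ℤ) - 1) + 1 = -(i:ℤ) := by ring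
        rw [harith]
        exact ih
  -- ### assembling the statement
  refine ⟨?_, ⟨hf, hfgen⟩, ⟨hh, hhgen⟩, ⟨hg, hggen⟩, ⟨nzf', s_BD⟩, ⟨nzl, s_BE⟩, ⟨nzh', s_CE⟩,
    ⟨nzg', s_CF⟩, ⟨nzk, s_DE⟩, ⟨nzf'', s_DA1⟩, ⟨nzk', s_EF⟩, ⟨nzh'', s_EA1⟩, ⟨nzl', s_EB1⟩,
    ⟨nzg'', s_FB1⟩, ⟨nzk'', s_FD1⟩, ?_⟩
  · -- the vanishing table
    intro i j n hij hmem
    fin_cases i <;> fin_cases j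
    · exact absurd rfl hij
    · exact hvanAB n (fun hn => hmem (by subst hn; simp))
    · exact hvanAC n (fun hn => hmem (by subst hn; simp))
    · exact v_AD n
    · exact v_AE n
    · exact v_AF n
    · exact hvanBA n
    · exact absurd rfl hij
    · exact hvanBC n (fun hn => hmem (by subst hn; simp))
    · exact v_BD n (fun hn => hmem (by subst hn; simp))
    · exact v_BE n (fun hn => hmem (by subst hn; simp))
    · exact v_BF n
    · exact hvanCA n
    · exact hvanCB n
    · exact absurd rfl hij
    · exact v_CD n
    · exact v_CE n (fun hn => hmem (by subst hn; simp))
    · exact v_CF n (fun hn => hmem (by subst hn; simp))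
    · exact v_DA n (fun hn => hmem (by subst hn; simp))
    · exact v_DB n
    · exact v_DC n
    · exact absurd rfl hij
    · exact v_DE n (fun hn => hmem (by subst hn; simp))
    · exact v_DF n
    · exact v_EA n (fun hn => hmem (by subst hn; simp))
    · exact v_EB n (fun hn => hmem (by subst hn; simp))
    · exact v_EC n
    · exact v_ED n
    · exact absurd rfl hij
    · exact v_EF n (fun hn => hmem (by subst hn; simp))
    · exact v_FA n
    · exact v_FB n (fun hn => hmem (by subst hn; simp))
    · exact v_FC n
    · exact v_FD n (fun hn => hmem (by subst hn; simp))
    · exact v_FE n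
    · exact absurd rfl hij
  · -- exceptionality of all shifts
    intro i n
    fin_cases i
    · exact ⟨notIsZero_shift hA n, (ends n).1,
        fun m hm => vanT (hvanAA m hm) n (n+m) (Iso.refl _) (sAdd A n m) (by ring)⟩
    · exact ⟨notIsZero_shift hB n, (ends n).2.1,
        fun m hm => vanT (hvanBB m hm) n (n+m) (Iso.refl _) (sAdd B n m) (by ring)⟩
    · exact ⟨notIsZero_shift hC n, (ends n).2.2.1,
        fun m hm => vanT (hvanCC m hm) n (n+m) (Iso.refl _) (sAdd C n m) (by ring)⟩
    · exact ⟨notIsZero_shift nzD n, (ends n).2.2.2.1,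
        fun m hm => vanT (v_DD m hm) n (n+m) (Iso.refl _) (sAdd D n m) (by ring)⟩
    · exact ⟨notIsZero_shift nzE n, (ends n).2.2.2.2.1,
        fun m hm => vanT (v_EE m hm) n (n+m) (Iso.refl _) (sAdd E n m) (by ring)⟩
    · exact ⟨notIsZero_shift nzF n, (ends n).2.2.2.2.2,
        fun m hm => vanT (v_FF m hm) n (n+m) (Iso.refl _) (sAdd F n m) (by ring)⟩
end

section
/- Let S be a K-linear triangulated category with a full and strong exceptional sequence (A, B, C) as above (one-dimensional Homs, nonzero composition), and extend f, g to an octahedron with standard notation. Then the octahedron is good: the triangles B --l--> E --(k', -h'')^T--> F ⊕ A[1] --(g'', f[1])--> B[1] and B --(g, f')^T--> C ⊕ D --(h', -k)--> E --l'--> B[1] are distinguished. -/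
open CategoryTheory CategoryTheory.Limits CategoryTheory.Pretriangulated

section helpers
variable {S : Type*} [Category S] [Preadditive S] [HasShift S ℤ]
  [∀ n : ℤ, (shiftFunctor S n).Additive]

lemma aux_shiftNegVanish {X Y : S} (hv : ∀ v : X ⟶ Y⟦(-1:ℤ)⟧, v = 0)
    (u : X⟦(1:ℤ)⟧ ⟶ Y) : u = 0 := by
  apply (shiftFunctor S (-1:ℤ)).map_injective
  rw [Functor.map_zero,
    ← cancel_epi ((shiftFunctorCompIsoId S (1:ℤ) (-1:ℤ) (by ring)).inv.app X), comp_zero]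
  exact hv _

lemma aux_shiftBothVanish {X Y : S} (hv : ∀ v : X ⟶ Y, v = 0)
    (u : X⟦(1:ℤ)⟧ ⟶ Y⟦(1:ℤ)⟧) : u = 0 := by
  obtain ⟨v, rfl⟩ := (shiftFunctor S (1:ℤ)).map_surjective u
  rw [hv v, Functor.map_zero]

lemma aux_unshiftZeroVanish {X Y : S} (hv : ∀ v : X ⟶ Y⟦(0:ℤ)⟧, v = 0)
    (u : X ⟶ Y) : u = 0 := by
  have h2 : u = (u ≫ (shiftFunctorZero S ℤ).inv.app Y) ≫ (shiftFunctorZero S ℤ).hom.app Y := by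
    simp
  rw [h2, hv (u ≫ (shiftFunctorZero S ℤ).inv.app Y), zero_comp]

end helpers


/-- in a `K`-linear triangulated category `S` with a full and strong
exceptional sequence `(A, B, C)` with one-dimensional Hom spaces and nonzero
composition, any octahedron extending `f, g` is good: the two triangles
`B --l--> E --(k', -h'')ᵀ--> F ⊕ A[1] --(g'', f[1])--> B[1]` and
`B --(g, f')ᵀ--> C ⊕ D --(h', -k)--> E --l'--> B[1]` are distinguished. -/
theorem octahedron_is_good
    {K : Type*} [Field K] {S : Type*} [Category S] [Preadditive S] [HasZeroObject S]
    [HasShift S ℤ] [∀ n : ℤ, (shiftFunctor S n).Additive] [Pretriangulated S]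
    [Linear K S] [HasBinaryBiproducts S]
    {A B C D E F : S}
    (f : A ⟶ B) (g : B ⟶ C) (h : A ⟶ C) (hcomp : f ≫ g = h)
    -- `(A, B, C)` is a strong exceptional sequence with one-dimensional Hom spaces
    -- and nonzero composition
    (hA : ¬ Limits.IsZero A) (hB : ¬ Limits.IsZero B) (hC : ¬ Limits.IsZero C)
    (hEndA : ∀ u : A ⟶ A, ∃ c : K, u = c • 𝟙 A)
    (hEndB : ∀ u : B ⟶ B, ∃ c : K, u = c • 𝟙 B)
    (hEndC : ∀ u : C ⟶ C, ∃ c : K, u = c • 𝟙 C)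
    (hf : f ≠ 0) (hfgen : ∀ u : A ⟶ B, ∃ c : K, u = c • f)
    (hg : g ≠ 0) (hggen : ∀ u : B ⟶ C, ∃ c : K, u = c • g)
    (hh : h ≠ 0) (hhgen : ∀ u : A ⟶ C, ∃ c : K, u = c • h)
    (hvanAA : ∀ n : ℤ, n ≠ 0 → ∀ u : A ⟶ A⟦n⟧, u = 0)
    (hvanAB : ∀ n : ℤ, n ≠ 0 → ∀ u : A ⟶ B⟦n⟧, u = 0)
    (hvanAC : ∀ n : ℤ, n ≠ 0 → ∀ u : A ⟶ C⟦n⟧, u = 0)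
    (hvanBB : ∀ n : ℤ, n ≠ 0 → ∀ u : B ⟶ B⟦n⟧, u = 0)
    (hvanBC : ∀ n : ℤ, n ≠ 0 → ∀ u : B ⟶ C⟦n⟧, u = 0)
    (hvanCC : ∀ n : ℤ, n ≠ 0 → ∀ u : C ⟶ C⟦n⟧, u = 0)
    (hvanBA : ∀ (n : ℤ) (u : B ⟶ A⟦n⟧), u = 0)
    (hvanCA : ∀ (n : ℤ) (u : C ⟶ A⟦n⟧), u = 0)
    (hvanCB : ∀ (n : ℤ) (u : C ⟶ B⟦n⟧), u = 0)
    -- fullness: `S` is the triangulated envelope of `{A, B, C}`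
    (hgen : ∀ P : S → Prop,
      (∀ X Y : S, (X ≅ Y) → P X → P Y) → P A → P B → P C →
      (∀ (X : S) (m : ℤ), P X → P (X⟦m⟧)) →
      (∀ T ∈ distTriang S, P T.obj₁ → P T.obj₂ → P T.obj₃) →
      ∀ X : S, P X)
    -- the octahedron on `(f, g)`, with the standard notation of the paper
    (f' : B ⟶ D) (f'' : D ⟶ A⟦(1 : ℤ)⟧) (h' : C ⟶ E) (h'' : E ⟶ A⟦(1 : ℤ)⟧)
    (g' : C ⟶ F) (g'' : F ⟶ B⟦(1 : ℤ)⟧) (k : D ⟶ E) (k' : E ⟶ F)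
    (l : B ⟶ E) (l' : E ⟶ B⟦(1 : ℤ)⟧)
    (hT1 : Triangle.mk f f' f'' ∈ distTriang S)
    (hT2 : Triangle.mk h h' h'' ∈ distTriang S)
    (hT3 : Triangle.mk g g' g'' ∈ distTriang S)
    (hT4 : Triangle.mk k k' (g'' ≫ f'⟦(1 : ℤ)⟧') ∈ distTriang S)
    (hl₁ : l = g ≫ h') (hl₂ : l = f' ≫ k)
    (hl'₁ : l' = h'' ≫ f⟦(1 : ℤ)⟧') (hl'₂ : l' = k' ≫ g'')
    (hk₁ : k ≫ h'' = f'') (hk₂ : h' ≫ k' = g') :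
    (Triangle.mk l (biprod.lift k' (-h'')) (biprod.desc g'' (f⟦(1 : ℤ)⟧'))
      ∈ distTriang S) ∧
    (Triangle.mk (biprod.lift g f') (biprod.desc h' (-k)) l' ∈ distTriang S) := by
  -- composite-zero facts
  have c12T1 : f ≫ f' = 0 := comp_distTriang_mor_zero₁₂ _ hT1
  have c23T1 : f' ≫ f'' = 0 := comp_distTriang_mor_zero₂₃ _ hT1
  have c31T1 : f'' ≫ f⟦(1:ℤ)⟧' = 0 := comp_distTriang_mor_zero₃₁ _ hT1
  have c12T2 : h ≫ h' = 0 := comp_distTriang_mor_zero₁₂ _ hT2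
  have c23T2 : h' ≫ h'' = 0 := comp_distTriang_mor_zero₂₃ _ hT2
  have c31T2 : h'' ≫ h⟦(1:ℤ)⟧' = 0 := comp_distTriang_mor_zero₃₁ _ hT2
  have c12T3 : g ≫ g' = 0 := comp_distTriang_mor_zero₁₂ _ hT3
  have c23T3 : g' ≫ g'' = 0 := comp_distTriang_mor_zero₂₃ _ hT3
  have c31T3 : g'' ≫ g⟦(1:ℤ)⟧' = 0 := comp_distTriang_mor_zero₃₁ _ hT3
  -- basic Hom-vanishing
  have vCB : ∀ u : C ⟶ B, u = 0 := aux_unshiftZeroVanish (hvanCB 0)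
  have vCA : ∀ u : C ⟶ A, u = 0 := aux_unshiftZeroVanish (hvanCA 0)
  have vBA : ∀ u : B ⟶ A, u = 0 := aux_unshiftZeroVanish (hvanBA 0)
  have vAC1 : ∀ u : A⟦(1:ℤ)⟧ ⟶ C, u = 0 :=
    aux_shiftNegVanish (fun v => hvanAC (-1) (by norm_num) v)
  have vCC1 : ∀ u : C⟦(1:ℤ)⟧ ⟶ C, u = 0 :=
    aux_shiftNegVanish (fun v => hvanCC (-1) (by norm_num) v)
  have vBC1 : ∀ u : B⟦(1:ℤ)⟧ ⟶ C, u = 0 :=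
    aux_shiftNegVanish (fun v => hvanBC (-1) (by norm_num) v)
  have vAB1 : ∀ u : A⟦(1:ℤ)⟧ ⟶ B, u = 0 :=
    aux_shiftNegVanish (fun v => hvanAB (-1) (by norm_num) v)
  have vBB1 : ∀ u : B⟦(1:ℤ)⟧ ⟶ B, u = 0 :=
    aux_shiftNegVanish (fun v => hvanBB (-1) (by norm_num) v)
  have vC1A1 : ∀ u : C⟦(1:ℤ)⟧ ⟶ A⟦(1:ℤ)⟧, u = 0 := aux_shiftBothVanish vCA
  have vB1A1 : ∀ u : B⟦(1:ℤ)⟧ ⟶ A⟦(1:ℤ)⟧, u = 0 := aux_shiftBothVanish vBA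
  have vC1B1 : ∀ u : C⟦(1:ℤ)⟧ ⟶ B⟦(1:ℤ)⟧, u = 0 := aux_shiftBothVanish vCB
  -- Hom(A⟦1⟧, E) = 0
  have vAE1 : ∀ u : A⟦(1:ℤ)⟧ ⟶ E, u = 0 := by
    intro u
    obtain ⟨w, hw⟩ := (shiftFunctor S (1:ℤ)).map_surjective (u ≫ h'')
    obtain ⟨c, hc⟩ := hEndA w
    have hwh : w ≫ h = 0 := by
      apply (shiftFunctor S (1:ℤ)).map_injective
      rw [Functor.map_comp, hw, Category.assoc, c31T2, comp_zero, Functor.map_zero]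
    have hch : c • h = 0 := by
      rw [← hwh, hc, Linear.smul_comp, Category.id_comp]
    have hc0 : c = 0 := by
      rcases smul_eq_zero.mp hch with h1 | h2
      · exact h1
      · exact absurd h2 hh
    have hu0 : u ≫ h'' = 0 := by
      rw [← hw, hc, hc0, zero_smul, Functor.map_zero]
    obtain ⟨v, hv⟩ := Triangle.coyoneda_exact₃ _ hT2 u hu0
    rw [hv, vAC1 v]; exact zero_comp
  -- Hom(C⟦1⟧, E) = 0
  have vCE1 : ∀ u : C⟦(1:ℤ)⟧ ⟶ E, u = 0 := by
    intro u
    obtain ⟨v, hv⟩ := Triangle.coyoneda_exact₃ _ hT2 u (vC1A1 (u ≫ h''))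
    rw [hv, vCC1 v]; exact zero_comp
  -- Hom(B⟦1⟧, E) = 0
  have vBE1 : ∀ u : B⟦(1:ℤ)⟧ ⟶ E, u = 0 := by
    intro u
    obtain ⟨v, hv⟩ := Triangle.coyoneda_exact₃ _ hT2 u (vB1A1 (u ≫ h''))
    rw [hv, vBC1 v]; exact zero_comp
  -- Hom(A⟦1⟧, F) = 0
  have vAF1 : ∀ u : A⟦(1:ℤ)⟧ ⟶ F, u = 0 := by
    intro u
    obtain ⟨w, hw⟩ := (shiftFunctor S (1:ℤ)).map_surjective (u ≫ g'')
    obtain ⟨c, hc⟩ := hfgen w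
    have hwg : w ≫ g = 0 := by
      apply (shiftFunctor S (1:ℤ)).map_injective
      rw [Functor.map_comp, hw, Category.assoc, c31T3, comp_zero, Functor.map_zero]
    have hch : c • h = 0 := by rw [← hcomp, ← Linear.smul_comp, ← hc, hwg]
    have hc0 : c = 0 := by
      rcases smul_eq_zero.mp hch with h1 | h2
      · exact h1
      · exact absurd h2 hh
    have hu0 : u ≫ g'' = 0 := by
      rw [← hw, hc, hc0, zero_smul, Functor.map_zero]
    obtain ⟨v, hv⟩ := Triangle.coyoneda_exact₃ _ hT3 u hu0
    rw [hv, vAC1 v]; exact zero_comp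
  -- Hom(B⟦1⟧, F) = 0
  have vBF1 : ∀ u : B⟦(1:ℤ)⟧ ⟶ F, u = 0 := by
    intro u
    obtain ⟨w, hw⟩ := (shiftFunctor S (1:ℤ)).map_surjective (u ≫ g'')
    obtain ⟨c, hc⟩ := hEndB w
    have hwg : w ≫ g = 0 := by
      apply (shiftFunctor S (1:ℤ)).map_injective
      rw [Functor.map_comp, hw, Category.assoc, c31T3, comp_zero, Functor.map_zero]
    have hch : c • g = 0 := by rw [← hwg, hc, Linear.smul_comp, Category.id_comp]
    have hc0 : c = 0 := by
      rcases smul_eq_zero.mp hch with h1 | h2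
      · exact h1
      · exact absurd h2 hg
    have hu0 : u ≫ g'' = 0 := by
      rw [← hw, hc, hc0, zero_smul, Functor.map_zero]
    obtain ⟨v, hv⟩ := Triangle.coyoneda_exact₃ _ hT3 u hu0
    rw [hv, vBC1 v]; exact zero_comp
  -- Hom(F, A⟦1⟧) = 0
  have vFA1 : ∀ u : F ⟶ A⟦(1:ℤ)⟧, u = 0 := by
    intro u
    obtain ⟨v, hv⟩ := Triangle.yoneda_exact₃ _ hT3 u (hvanCA 1 (g' ≫ u))
    rw [hv, vB1A1 v]; exact comp_zero
  -- Hom(F, C) = 0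
  have vFC : ∀ u : F ⟶ C, u = 0 := by
    intro u
    obtain ⟨c, hc⟩ := hEndC (g' ≫ u)
    have hcg : c • g = 0 := by
      rw [← Category.comp_id g, ← Linear.comp_smul, ← hc, ← Category.assoc, c12T3, zero_comp]
    have hc0 : c = 0 := by
      rcases smul_eq_zero.mp hcg with h1 | h2
      · exact h1
      · exact absurd h2 hg
    have hu0 : g' ≫ u = 0 := by rw [hc, hc0, zero_smul]
    obtain ⟨v, hv⟩ := Triangle.yoneda_exact₃ _ hT3 u hu0
    rw [hv, vBC1 v]; exact comp_zero
  -- Hom(D, C) = 0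
  have vDC : ∀ u : D ⟶ C, u = 0 := by
    intro u
    obtain ⟨c, hc⟩ := hggen (f' ≫ u)
    have hch : c • h = 0 := by
      rw [← hcomp, ← Linear.comp_smul, ← hc, ← Category.assoc, c12T1, zero_comp]
    have hc0 : c = 0 := by
      rcases smul_eq_zero.mp hch with h1 | h2
      · exact h1
      · exact absurd h2 hh
    have hu0 : f' ≫ u = 0 := by rw [hc, hc0, zero_smul]
    obtain ⟨v, hv⟩ := Triangle.yoneda_exact₃ _ hT1 u hu0
    rw [hv, vAC1 v]; exact comp_zero
  -- Hom(C, D) = 0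
  have vCD : ∀ u : C ⟶ D, u = 0 := by
    intro u
    obtain ⟨v, hv⟩ := Triangle.coyoneda_exact₃ _ hT1 u (hvanCA 1 (u ≫ f''))
    rw [hv, vCB v]; exact zero_comp
  -- Hom(A⟦1⟧, D) = 0
  have vAD1 : ∀ u : A⟦(1:ℤ)⟧ ⟶ D, u = 0 := by
    intro u
    obtain ⟨w, hw⟩ := (shiftFunctor S (1:ℤ)).map_surjective (u ≫ f'')
    obtain ⟨c, hc⟩ := hEndA w
    have hwf : w ≫ f = 0 := by
      apply (shiftFunctor S (1:ℤ)).map_injective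
      rw [Functor.map_comp, hw, Category.assoc, c31T1, comp_zero, Functor.map_zero]
    have hcf : c • f = 0 := by rw [← hwf, hc, Linear.smul_comp, Category.id_comp]
    have hc0 : c = 0 := by
      rcases smul_eq_zero.mp hcf with h1 | h2
      · exact h1
      · exact absurd h2 hf
    have hu0 : u ≫ f'' = 0 := by
      rw [← hw, hc, hc0, zero_smul, Functor.map_zero]
    obtain ⟨v, hv⟩ := Triangle.coyoneda_exact₃ _ hT1 u hu0
    rw [hv, vAB1 v]; exact zero_comp
  -- detection lemmas
  have detF : ∀ u : F ⟶ F, g' ≫ u = 0 → u = 0 := by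
    intro u hu
    obtain ⟨v, hv⟩ := Triangle.yoneda_exact₃ _ hT3 u hu
    rw [hv, vBF1 v]; exact comp_zero
  have detA1 : ∀ u : A⟦(1:ℤ)⟧ ⟶ A⟦(1:ℤ)⟧, h'' ≫ u = 0 → u = 0 := by
    intro u hu
    obtain ⟨v, hv⟩ := Triangle.yoneda_exact₃ _ (rot_of_distTriang _ hT2) u hu
    rw [hv, vC1A1 v]; exact comp_zero
  constructor
  · -- first triangle : B ⟶ E ⟶ F ⊕ A⟦1⟧ ⟶ B⟦1⟧
    obtain ⟨G, m, n, hTl⟩ := Pretriangulated.distinguished_cocone_triangle l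
    -- φ₁ : F ⟶ G by TR3 on (𝟙 B, h') : T3 → Tl
    obtain ⟨φ₁, hφ₁a, hφ₁b⟩ := Pretriangulated.complete_distinguished_triangle_morphism
      _ _ hT3 hTl (𝟙 B) h' (hl₁.symm.trans (Category.id_comp _).symm)
    change F ⟶ G at φ₁
    have hφ₁b' : φ₁ ≫ n = g'' := hφ₁b.symm.trans (by
      show g'' ≫ (shiftFunctor S (1:ℤ)).map (𝟙 B) = g''
      rw [CategoryTheory.Functor.map_id, Category.comp_id])
    have hφ₁a' : g' ≫ φ₁ = h' ≫ m := hφ₁a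
    clear hφ₁a hφ₁b
    -- φ₂ : A⟦1⟧ ⟶ G with φ₂ ≫ n = f⟦1⟧'
    have hfl : f ≫ l = 0 := by rw [hl₁, ← Category.assoc, hcomp, c12T2]
    obtain ⟨φ₂, hφ₂⟩ := Triangle.coyoneda_exact₁ _ hTl (f⟦(1:ℤ)⟧')
      (by show f⟦(1:ℤ)⟧' ≫ l⟦(1:ℤ)⟧' = 0
          rw [← Functor.map_comp, hfl, Functor.map_zero])
    change A⟦(1:ℤ)⟧ ⟶ G at φ₂
    have hφ₂' : φ₂ ≫ n = f⟦(1:ℤ)⟧' := hφ₂.symm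
    clear hφ₂
    -- ψ₁ : G ⟶ F with m ≫ ψ₁ = k'
    have hlk' : l ≫ k' = 0 := by rw [hl₁, Category.assoc, hk₂, c12T3]
    obtain ⟨ψ₁, hψ₁⟩ := Triangle.yoneda_exact₂ _ hTl k' hlk'
    change G ⟶ F at ψ₁
    have hψ₁' : m ≫ ψ₁ = k' := hψ₁.symm
    clear hψ₁
    -- ψ₂ : G ⟶ A⟦1⟧ with m ≫ ψ₂ = h''
    have hlh'' : l ≫ h'' = 0 := by rw [hl₁, Category.assoc, c23T2, comp_zero]
    obtain ⟨ψ₂, hψ₂⟩ := Triangle.yoneda_exact₂ _ hTl h'' hlh''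
    change G ⟶ A⟦(1:ℤ)⟧ at ψ₂
    have hψ₂' : m ≫ ψ₂ = h'' := hψ₂.symm
    clear hψ₂
    -- key identity (a) : k' ≫ φ₁ - h'' ≫ φ₂ = m
    have key1 : k' ≫ φ₁ - h'' ≫ φ₂ = m := by
      have hρn : (m - k' ≫ φ₁ + h'' ≫ φ₂) ≫ n = 0 := by
        have e1 : m ≫ n = 0 := comp_distTriang_mor_zero₂₃ _ hTl
        rw [Preadditive.add_comp, Preadditive.sub_comp, e1, Category.assoc, Category.assoc, hφ₁b', hφ₂', ← hl'₂, ← hl'₁]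
        abel
      obtain ⟨τ, hτ⟩ := Triangle.coyoneda_exact₃ _ hTl _ hρn
      change E ⟶ E at τ
      have hτ' : m - k' ≫ φ₁ + h'' ≫ φ₂ = τ ≫ m := hτ
      clear hτ
      have hh'ρ : h' ≫ (m - k' ≫ φ₁ + h'' ≫ φ₂) = 0 := by
        rw [Preadditive.comp_add, Preadditive.comp_sub, ← Category.assoc, ← Category.assoc, hk₂, hφ₁a', c23T2,
          zero_comp, add_zero, sub_self]
      have hh'τ : (h' ≫ τ) ≫ m = 0 := by
        rw [Category.assoc, ← hτ', hh'ρ]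
      obtain ⟨σ, hσ⟩ := Triangle.coyoneda_exact₂ _ hTl (h' ≫ τ) hh'τ
      change C ⟶ B at σ
      have hσ' : h' ≫ τ = σ ≫ l := hσ
      clear hσ
      have hh'τ0 : h' ≫ τ = 0 := by rw [hσ', vCB σ, zero_comp]
      obtain ⟨υ, hυ⟩ := Triangle.yoneda_exact₃ _ hT2 τ hh'τ0
      change A⟦(1:ℤ)⟧ ⟶ E at υ
      have hυ' : τ = h'' ≫ υ := hυ
      have hτ0 : τ = 0 := by rw [hυ', vAE1 υ, comp_zero]
      have hz : m - k' ≫ φ₁ + h'' ≫ φ₂ = 0 := by rw [hτ', hτ0, zero_comp]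
      rw [eq_comm, ← sub_eq_zero]
      calc m - (k' ≫ φ₁ - h'' ≫ φ₂) = m - k' ≫ φ₁ + h'' ≫ φ₂ := by abel
      _ = 0 := hz
    -- the component identities
    have e11 : φ₁ ≫ ψ₁ = 𝟙 F := by
      have h0 : g' ≫ (φ₁ ≫ ψ₁ - 𝟙 F) = 0 := by
        rw [Preadditive.comp_sub, ← Category.assoc, hφ₁a', Category.assoc, hψ₁', hk₂, Category.comp_id,
          sub_self]
      have h1 := detF _ h0
      rwa [sub_eq_zero] at h1
    have e12 : φ₁ ≫ ψ₂ = 0 := vFA1 _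
    have e21 : φ₂ ≫ ψ₁ = 0 := vAF1 _
    have e22 : φ₂ ≫ ψ₂ = -𝟙 (A⟦(1:ℤ)⟧) := by
      have hstep : h'' ≫ (φ₂ ≫ ψ₂ + 𝟙 (A⟦(1:ℤ)⟧)) = 0 := by
        have h1 : h'' ≫ φ₂ = k' ≫ φ₁ - m := by rw [← key1]; abel
        rw [Preadditive.comp_add, ← Category.assoc, h1, Preadditive.sub_comp, Category.assoc, e12, comp_zero,
          zero_sub, hψ₂', Category.comp_id]
        abel
      have h2 := detA1 _ hstep
      rwa [← eq_neg_iff_add_eq_zero] at h2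
    have hθψ : biprod.desc φ₁ φ₂ ≫ biprod.lift ψ₁ (-ψ₂) = 𝟙 (F ⊞ A⟦(1:ℤ)⟧) := by
      apply biprod.hom_ext' <;> apply biprod.hom_ext <;>
        simp [e11, e12, e21, e22]
    have hθn : biprod.desc φ₁ φ₂ ≫ n = biprod.desc g'' (f⟦(1:ℤ)⟧') := by
      apply biprod.hom_ext' <;> simp [hφ₁b', hφ₂']
    have hψθ : biprod.lift ψ₁ (-ψ₂) ≫ biprod.desc φ₁ φ₂ = 𝟙 G := by
      have hmα : m ≫ (biprod.lift ψ₁ (-ψ₂) ≫ biprod.desc φ₁ φ₂ - 𝟙 G) = 0 := by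
        rw [Preadditive.comp_sub, Category.comp_id, ← Category.assoc]
        have hml : m ≫ biprod.lift ψ₁ (-ψ₂) = biprod.lift k' (-h'') := by
          apply biprod.hom_ext <;> simp [hψ₁', hψ₂']
        rw [hml, biprod.lift_desc, Preadditive.neg_comp, ← sub_eq_add_neg, key1, sub_self]
      obtain ⟨β, hβ⟩ := Triangle.yoneda_exact₃ _ hTl _ hmα
      change B⟦(1:ℤ)⟧ ⟶ G at β
      have hβ' : biprod.lift ψ₁ (-ψ₂) ≫ biprod.desc φ₁ φ₂ - 𝟙 G = n ≫ β := hβ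
      clear hβ
      have hθ0 : biprod.desc φ₁ φ₂ ≫ (biprod.lift ψ₁ (-ψ₂) ≫ biprod.desc φ₁ φ₂ - 𝟙 G) = 0 := by
        rw [Preadditive.comp_sub, ← Category.assoc, hθψ, Category.id_comp, Category.comp_id, sub_self]
      have hg''β : g'' ≫ β = 0 := by
        have h2 : (biprod.inl : F ⟶ F ⊞ A⟦(1:ℤ)⟧) ≫ biprod.desc φ₁ φ₂ ≫
            (biprod.lift ψ₁ (-ψ₂) ≫ biprod.desc φ₁ φ₂ - 𝟙 G) = 0 := by
          rw [hθ0, comp_zero]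
        rw [biprod.inl_desc_assoc, hβ', ← Category.assoc, hφ₁b'] at h2
        exact h2
      obtain ⟨γ, hγ⟩ := Triangle.yoneda_exact₃ _ (rot_of_distTriang _ hT3) β hg''β
      change C⟦(1:ℤ)⟧ ⟶ G at γ
      have hγ0 : γ = 0 := by
        have hγn : (γ ≫ n) = 0 := vC1B1 _
        obtain ⟨w, hw⟩ := Triangle.coyoneda_exact₃ _ hTl γ hγn
        change C⟦(1:ℤ)⟧ ⟶ E at w
        have hw' : γ = w ≫ m := hw
        rw [hw', vCE1 w, zero_comp]
      have hβ0 : β = 0 := by rw [hγ, hγ0]; exact comp_zero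
      have hfin : biprod.lift ψ₁ (-ψ₂) ≫ biprod.desc φ₁ φ₂ - 𝟙 G = 0 := by
        rw [hβ', hβ0, comp_zero]
      rwa [sub_eq_zero] at hfin
    haveI : IsIso (biprod.desc φ₁ φ₂) := ⟨biprod.lift ψ₁ (-ψ₂), hθψ, hψθ⟩
    refine Pretriangulated.isomorphic_distinguished _ hTl _ ?_
    refine Triangle.isoMk _ _ (Iso.refl B) (Iso.refl E) (@asIso _ _ _ _ (biprod.desc φ₁ φ₂) this) ?_ ?_ ?_
    · exact (Category.comp_id l).trans (Category.id_comp l).symm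
    · dsimp
      show biprod.lift k' (-h'') ≫ biprod.desc φ₁ φ₂ = 𝟙 E ≫ m
      rw [Category.id_comp, biprod.lift_desc, Preadditive.neg_comp, ← sub_eq_add_neg, key1]
    · dsimp
      show biprod.desc g'' (f⟦(1:ℤ)⟧') ≫ (shiftFunctor S (1:ℤ)).map (𝟙 B) = biprod.desc φ₁ φ₂ ≫ n
      rw [hθn]
      rw [CategoryTheory.Functor.map_id, Category.comp_id]
  · -- second triangle : B ⟶ C ⊕ D ⟶ E ⟶ B⟦1⟧
    obtain ⟨G', m₀, n₀, hTl'⟩ := Pretriangulated.distinguished_cocone_triangle₂ l'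
    have hTl2 : (Triangle.mk m₀ n₀ l').rotate.rotate ∈ distTriang S :=
      rot_of_distTriang _ (rot_of_distTriang _ hTl')
    -- u₁ : C ⟶ G' via TR3
    obtain ⟨u₁, hu₁a, hu₁b⟩ := Pretriangulated.complete_distinguished_triangle_morphism₂
      _ _ hT2 hTl' f (𝟙 E) (hl'₁.symm.trans (Category.id_comp _).symm)
    change C ⟶ G' at u₁
    have hu₁a' : h ≫ u₁ = f ≫ m₀ := hu₁a
    have hu₁n : u₁ ≫ n₀ = h' := hu₁b.symm.trans (Category.comp_id _)
    clear hu₁a hu₁b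
    -- u₂ : D ⟶ G' with u₂ ≫ n₀ = k
    have hkl' : k ≫ l' = 0 := by
      rw [hl'₁, ← Category.assoc, hk₁, c31T1]
    obtain ⟨u₂, hu₂⟩ := Triangle.coyoneda_exact₃ _ hTl' k hkl'
    change D ⟶ G' at u₂
    have hu₂n : u₂ ≫ n₀ = k := hu₂.symm
    clear hu₂
    -- v₁ : G' ⟶ C with m₀ ≫ v₁ = g
    obtain ⟨v₁, hv₁⟩ : ∃ v₁ : G' ⟶ C, m₀ ≫ v₁ = g := by
      have hcond : l' ≫ g⟦(1:ℤ)⟧' = 0 := by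
        rw [hl'₁, Category.assoc, ← Functor.map_comp, hcomp, c31T2]
      obtain ⟨w, hw⟩ := Triangle.yoneda_exact₂ _ hTl2 (g⟦(1:ℤ)⟧') hcond
      change G'⟦(1:ℤ)⟧ ⟶ C⟦(1:ℤ)⟧ at w
      have hw' : g⟦(1:ℤ)⟧' = (-(m₀⟦(1:ℤ)⟧')) ≫ w := hw
      obtain ⟨w₀, hw₀⟩ := (shiftFunctor S (1:ℤ)).map_surjective w
      refine ⟨-w₀, ?_⟩
      apply (shiftFunctor S (1:ℤ)).map_injective
      rw [Functor.map_comp, Functor.map_neg, hw₀, Preadditive.comp_neg,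
        ← Preadditive.neg_comp, ← hw']
    -- v₂ : G' ⟶ D with m₀ ≫ v₂ = f'
    obtain ⟨v₂, hv₂⟩ : ∃ v₂ : G' ⟶ D, m₀ ≫ v₂ = f' := by
      have hcond : l' ≫ f'⟦(1:ℤ)⟧' = 0 := by
        rw [hl'₁, Category.assoc, ← Functor.map_comp, c12T1, Functor.map_zero, comp_zero]
      obtain ⟨w, hw⟩ := Triangle.yoneda_exact₂ _ hTl2 (f'⟦(1:ℤ)⟧') hcond
      change G'⟦(1:ℤ)⟧ ⟶ D⟦(1:ℤ)⟧ at w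
      have hw' : f'⟦(1:ℤ)⟧' = (-(m₀⟦(1:ℤ)⟧')) ≫ w := hw
      obtain ⟨w₀, hw₀⟩ := (shiftFunctor S (1:ℤ)).map_surjective w
      refine ⟨-w₀, ?_⟩
      apply (shiftFunctor S (1:ℤ)).map_injective
      rw [Functor.map_comp, Functor.map_neg, hw₀, Preadditive.comp_neg,
        ← Preadditive.neg_comp, ← hw']
    -- f ≫ m₀ ≠ 0
    have hfm₀ : f ≫ m₀ ≠ 0 := by
      intro h0
      apply hf
      have hcond : f⟦(1:ℤ)⟧' ≫ (-(m₀⟦(1:ℤ)⟧')) = 0 := by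
        rw [Preadditive.comp_neg, ← Functor.map_comp, h0, Functor.map_zero, neg_zero]
      obtain ⟨w, hw⟩ := Triangle.coyoneda_exact₂ _ hTl2 (f⟦(1:ℤ)⟧') hcond
      change A⟦(1:ℤ)⟧ ⟶ E at w
      have hw' : f⟦(1:ℤ)⟧' = w ≫ l' := hw
      apply (shiftFunctor S (1:ℤ)).map_injective
      rw [hw', vAE1 w, zero_comp, Functor.map_zero]
    -- key identity (a') : g ≫ u₁ - f' ≫ u₂ = m₀
    have key2 : g ≫ u₁ - f' ≫ u₂ = m₀ := by
      have hρn : (m₀ - g ≫ u₁ + f' ≫ u₂) ≫ n₀ = 0 := by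
        have e1 : m₀ ≫ n₀ = 0 := comp_distTriang_mor_zero₁₂ _ hTl'
        rw [Preadditive.add_comp, Preadditive.sub_comp, e1, Category.assoc, Category.assoc,
          hu₁n, hu₂n, ← hl₁, ← hl₂]
        abel
      obtain ⟨σ, hσ⟩ := Triangle.coyoneda_exact₂ _ hTl' _ hρn
      change B ⟶ B at σ
      have hσ' : m₀ - g ≫ u₁ + f' ≫ u₂ = σ ≫ m₀ := hσ
      clear hσ
      obtain ⟨c, hc⟩ := hEndB σ
      have hfρ : f ≫ (m₀ - g ≫ u₁ + f' ≫ u₂) = 0 := by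
        rw [Preadditive.comp_add, Preadditive.comp_sub, ← Category.assoc, ← Category.assoc,
          hcomp, hu₁a', c12T1, zero_comp, add_zero, sub_self]
      have hcfm : c • (f ≫ m₀) = 0 := by
        rw [← Linear.comp_smul, ← Category.id_comp m₀, ← Linear.smul_comp, ← hc, ← hσ', hfρ]
      have hc0 : c = 0 := by
        rcases smul_eq_zero.mp hcfm with h1 | h2
        · exact h1
        · exact absurd h2 hfm₀
      have hz : m₀ - g ≫ u₁ + f' ≫ u₂ = 0 := by
        rw [hσ', hc, hc0, zero_smul, zero_comp]
      rw [eq_comm, ← sub_eq_zero]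
      calc m₀ - (g ≫ u₁ - f' ≫ u₂) = m₀ - g ≫ u₁ + f' ≫ u₂ := by abel
      _ = 0 := hz
    -- component identities
    have d12 : u₁ ≫ v₂ = 0 := vCD _
    have d21 : u₂ ≫ v₁ = 0 := vDC _
    have d11 : u₁ ≫ v₁ = 𝟙 C := by
      have hgu : g ≫ u₁ = m₀ + f' ≫ u₂ := by rw [← key2]; abel
      have h0 : g ≫ (u₁ ≫ v₁ - 𝟙 C) = 0 := by
        rw [Preadditive.comp_sub, ← Category.assoc, hgu, Preadditive.add_comp,
          Category.assoc, d21, comp_zero, add_zero, hv₁, Category.comp_id, sub_self]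
      obtain ⟨v, hv⟩ := Triangle.yoneda_exact₂ _ hT3 _ h0
      change F ⟶ C at v
      have hv' : u₁ ≫ v₁ - 𝟙 C = g' ≫ v := hv
      have : u₁ ≫ v₁ - 𝟙 C = 0 := by rw [hv', vFC v, comp_zero]
      rwa [sub_eq_zero] at this
    have d22 : u₂ ≫ v₂ = -𝟙 D := by
      have hfu : f' ≫ u₂ = g ≫ u₁ - m₀ := by rw [← key2]; abel
      have h0 : f' ≫ (u₂ ≫ v₂ + 𝟙 D) = 0 := by
        rw [Preadditive.comp_add, ← Category.assoc, hfu, Preadditive.sub_comp,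
          Category.assoc, hv₂, d12, comp_zero, zero_sub, Category.comp_id]
        abel
      obtain ⟨v, hv⟩ := Triangle.yoneda_exact₃ _ hT1 _ h0
      change A⟦(1:ℤ)⟧ ⟶ D at v
      have hv' : u₂ ≫ v₂ + 𝟙 D = f'' ≫ v := hv
      have hz : u₂ ≫ v₂ + 𝟙 D = 0 := by rw [hv', vAD1 v, comp_zero]
      rwa [← eq_neg_iff_add_eq_zero] at hz
    have hθψ2 : biprod.desc u₁ (-u₂) ≫ biprod.lift v₁ v₂ = 𝟙 (C ⊞ D) := by
      apply biprod.hom_ext' <;> apply biprod.hom_ext <;> simp [d11, d12, d21, d22]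
    have hψθ2 : biprod.lift v₁ v₂ ≫ biprod.desc u₁ (-u₂) = 𝟙 G' := by
      have hmα : m₀ ≫ (biprod.lift v₁ v₂ ≫ biprod.desc u₁ (-u₂) - 𝟙 G') = 0 := by
        rw [Preadditive.comp_sub, Category.comp_id, ← Category.assoc]
        have hml : m₀ ≫ biprod.lift v₁ v₂ = biprod.lift g f' := by
          apply biprod.hom_ext <;> simp [hv₁, hv₂]
        rw [hml, biprod.lift_desc, Preadditive.comp_neg, ← sub_eq_add_neg, key2, sub_self]
      obtain ⟨β, hβ⟩ := Triangle.yoneda_exact₂ _ hTl' _ hmα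
      change E ⟶ G' at β
      have hβ' : biprod.lift v₁ v₂ ≫ biprod.desc u₁ (-u₂) - 𝟙 G' = n₀ ≫ β := hβ
      clear hβ
      have hθ0 : biprod.desc u₁ (-u₂) ≫
          (biprod.lift v₁ v₂ ≫ biprod.desc u₁ (-u₂) - 𝟙 G') = 0 := by
        rw [Preadditive.comp_sub, ← Category.assoc, hθψ2, Category.id_comp,
          Category.comp_id, sub_self]
      have hh'β : h' ≫ β = 0 := by
        have h2 : (biprod.inl : C ⟶ C ⊞ D) ≫ biprod.desc u₁ (-u₂) ≫
            (biprod.lift v₁ v₂ ≫ biprod.desc u₁ (-u₂) - 𝟙 G') = 0 := by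
          rw [hθ0, comp_zero]
        rw [biprod.inl_desc_assoc, hβ', ← Category.assoc, hu₁n] at h2
        exact h2
      have hkβ : k ≫ β = 0 := by
        have h2 : (biprod.inr : D ⟶ C ⊞ D) ≫ biprod.desc u₁ (-u₂) ≫
            (biprod.lift v₁ v₂ ≫ biprod.desc u₁ (-u₂) - 𝟙 G') = 0 := by
          rw [hθ0, comp_zero]
        rw [biprod.inr_desc_assoc, hβ', ← Category.assoc, Preadditive.neg_comp, hu₂n,
          Preadditive.neg_comp, neg_eq_zero] at h2
        exact h2
      obtain ⟨γ, hγ⟩ := Triangle.yoneda_exact₃ _ hT2 β hh'β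
      change A⟦(1:ℤ)⟧ ⟶ G' at γ
      have hγ' : β = h'' ≫ γ := hγ
      clear hγ
      have hf''γ : f'' ≫ γ = 0 := by
        rw [← hk₁, Category.assoc, ← hγ', hkβ]
      obtain ⟨w, hw⟩ := Triangle.yoneda_exact₃ _ (rot_of_distTriang _ hT1) γ hf''γ
      change B⟦(1:ℤ)⟧ ⟶ G' at w
      have hw0 : w = 0 := by
        have hwn : w ≫ n₀ = 0 := vBE1 _
        obtain ⟨x, hx⟩ := Triangle.coyoneda_exact₂ _ hTl' w hwn
        change B⟦(1:ℤ)⟧ ⟶ B at x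
        have hx' : w = x ≫ m₀ := hx
        rw [hx', vBB1 x, zero_comp]
      have hγ0 : γ = 0 := by rw [hw, hw0]; exact comp_zero
      have hβ0 : β = 0 := by rw [hγ', hγ0, comp_zero]
      have hfin : biprod.lift v₁ v₂ ≫ biprod.desc u₁ (-u₂) - 𝟙 G' = 0 := by
        rw [hβ', hβ0, comp_zero]
      rwa [sub_eq_zero] at hfin
    haveI : IsIso (biprod.desc u₁ (-u₂)) := ⟨biprod.lift v₁ v₂, hθψ2, hψθ2⟩
    refine Pretriangulated.isomorphic_distinguished _ hTl' _ ?_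
    refine Triangle.isoMk _ _ (Iso.refl B) (@asIso _ _ _ _ (biprod.desc u₁ (-u₂)) this) (Iso.refl E) ?_ ?_ ?_
    · dsimp
      show biprod.lift g f' ≫ biprod.desc u₁ (-u₂) = 𝟙 B ≫ m₀
      rw [Category.id_comp, biprod.lift_desc, Preadditive.comp_neg, ← sub_eq_add_neg, key2]
    · dsimp
      show biprod.desc h' (-k) ≫ 𝟙 E = biprod.desc u₁ (-u₂) ≫ n₀
      rw [Category.comp_id]
      apply biprod.hom_ext' <;> simp [hu₁n, hu₂n]
    · show l' ≫ (shiftFunctor S (1:ℤ)).map (𝟙 B) = 𝟙 E ≫ l'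
      rw [CategoryTheory.Functor.map_id, Category.comp_id, Category.id_comp]
end
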